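/- arXiv:1406.3257 — 3 statements merged into one kernel-verified Lean document; each statement's English description precedes it below -/
import Mathlib

section
/- Assume that the matrix P is irreducible. Then there exist constants δ_1, δ_2 > 0 such that for every finite maximal antichain Γ ⊂ Ω^*: δ_1 ≤ Σ_{σ∈Γ} (p_σ c_σ^r)^{s_r/(s_r+r)} ≤ δ_2. -/
open Filter MeasureTheory
open scoped ENNReal

namespace QM

/-- A finite word is admissible w.r.t. `P` if consecutive transition probabilities
are positive. -/
def Adm {N : ℕ} (P : Matrix (Fin N) (Fin N) ℝ) (σ : List (Fin N)) : Prop :=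
  List.Chain' (fun a b => 0 < P a b) σ

/-- An infinite word is admissible if all consecutive transition probabilities are positive. -/
def AdmInf {N : ℕ} (P : Matrix (Fin N) (Fin N) ℝ) (τ : ℕ → Fin N) : Prop :=
  ∀ h : ℕ, 0 < P (τ h) (τ (h + 1))

/-- `wprod M σ = M σ₁ σ₂ * ⋯ * M σ_{k-1} σ_k`; equals `1` when `σ` has length at most 1. -/
noncomputable def wprod {N : ℕ} (M : Matrix (Fin N) (Fin N) ℝ) (σ : List (Fin N)) : ℝ :=
  ((σ.zip σ.tail).map fun x => M x.1 x.2).prod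

/-- Spectral radius of a real square matrix: the largest modulus of a complex eigenvalue. -/
noncomputable def specRad {ι : Type} [Fintype ι] [DecidableEq ι] (A : Matrix ι ι ℝ) : ℝ :=
  sSup {x : ℝ | ∃ z : ℂ,
    Module.End.HasEigenvalue (Matrix.toLin' (A.map (fun t => (t : ℂ)))) z ∧ x = ‖z‖}

/-- The matrix `A_{G,s}` with entries `(p_{ij} c_{ij}^r)^{s/(s+r)}` (zero when `p_{ij} = 0`). -/
noncomputable def AGs {N : ℕ} (P c : Matrix (Fin N) (Fin N) ℝ) (r s : ℝ) :
    Matrix (Fin N) (Fin N) ℝ :=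
  Matrix.of fun i j => if 0 < P i j then (P i j * c i j ^ r) ^ (s / (s + r)) else 0

/-- `Ψ_G(s)`, the spectral radius of `A_{G,s}`. -/
noncomputable def PsiG {N : ℕ} (P c : Matrix (Fin N) (Fin N) ℝ) (r s : ℝ) : ℝ :=
  specRad (AGs P c r s)

/-- The submatrix of `A_{G,s}` with rows and columns in `H`. -/
noncomputable def AHs {N : ℕ} (P c : Matrix (Fin N) (Fin N) ℝ) (r s : ℝ)
    (H : Finset (Fin N)) : Matrix {i // i ∈ H} {i // i ∈ H} ℝ :=
  Matrix.of fun i j => AGs P c r s i.1 j.1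

/-- `Ψ_H(s)`, the spectral radius of `A_{H,s}`. -/
noncomputable def PsiH {N : ℕ} (P c : Matrix (Fin N) (Fin N) ℝ) (r s : ℝ)
    (H : Finset (Fin N)) : ℝ :=
  specRad (AHs P c r s H)

/-- Edge relation of the directed graph `G` associated with `P`. -/
def Edge {N : ℕ} (P : Matrix (Fin N) (Fin N) ℝ) (i j : Fin N) : Prop := 0 < P i j

/-- Reachability along directed paths all of whose vertices lie in `S`. -/
def ReachIn {N : ℕ} (P : Matrix (Fin N) (Fin N) ℝ) (S : Set (Fin N)) (i j : Fin N) : Prop :=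
  Relation.ReflTransGen (fun a b => Edge P a b ∧ a ∈ S ∧ b ∈ S) i j

/-- A set of vertices is strongly connected (with the inherited edges). -/
def StrConn {N : ℕ} (P : Matrix (Fin N) (Fin N) ℝ) (S : Set (Fin N)) : Prop :=
  ∀ i ∈ S, ∀ j ∈ S, ReachIn P S i j

/-- `H` is a strongly connected component of `G` containing at least one edge. -/
def IsSCC {N : ℕ} (P : Matrix (Fin N) (Fin N) ℝ) (H : Finset (Fin N)) : Prop :=
  StrConn P ↑H ∧ (∀ S : Finset (Fin N), H ⊆ S → StrConn P ↑S → S = H) ∧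
    ∃ i ∈ H, ∃ j ∈ H, Edge P i j

/-- `H₁ ≺ H₂` : some vertex of `H₂` can be reached from some vertex of `H₁` by a
directed path in `G`. -/
def Prec {N : ℕ} (P : Matrix (Fin N) (Fin N) ℝ) (H₁ H₂ : Finset (Fin N)) : Prop :=
  ∃ i ∈ H₁, ∃ j ∈ H₂, Relation.ReflTransGen (Edge P) i j

/-- Irreducibility of `P` : the graph `G` is strongly connected. -/
def Irred {N : ℕ} (P : Matrix (Fin N) (Fin N) ℝ) : Prop :=
  ∀ i j : Fin N, Relation.TransGen (Edge P) i j

/-- `Γ` is a finite maximal antichain in `Ω^*`. -/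
def IsMaxAntichain {N : ℕ} (P : Matrix (Fin N) (Fin N) ℝ) (Γ : Finset (List (Fin N))) : Prop :=
  (∀ σ ∈ Γ, σ ≠ [] ∧ Adm P σ) ∧
    (∀ σ ∈ Γ, ∀ ω ∈ Γ, σ ≠ ω → ¬ σ <+: ω) ∧
    ∀ τ : ℕ → Fin N, AdmInf P τ → ∃ k : ℕ, 0 < k ∧ (List.range k).map τ ∈ Γ

/-- `Γ` is a finite maximal antichain in `H^*`. -/
def IsMaxAntichainIn {N : ℕ} (P : Matrix (Fin N) (Fin N) ℝ) (H : Finset (Fin N))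
    (Γ : Finset (List (Fin N))) : Prop :=
  (∀ σ ∈ Γ, σ ≠ [] ∧ Adm P σ ∧ ∀ a ∈ σ, a ∈ H) ∧
    (∀ σ ∈ Γ, ∀ ω ∈ Γ, σ ≠ ω → ¬ σ <+: ω) ∧
    ∀ τ : ℕ → Fin N, AdmInf P τ → (∀ h, τ h ∈ H) → ∃ k : ℕ, 0 < k ∧ (List.range k).map τ ∈ Γ

/-- `Γ` is a finite maximal antichain in `H^*(i)`. -/
def IsMaxAntichainInAt {N : ℕ} (P : Matrix (Fin N) (Fin N) ℝ) (H : Finset (Fin N)) (i : Fin N)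
    (Γ : Finset (List (Fin N))) : Prop :=
  (∀ σ ∈ Γ, σ ≠ [] ∧ Adm P σ ∧ (∀ a ∈ σ, a ∈ H) ∧ σ.head? = some i) ∧
    (∀ σ ∈ Γ, ∀ ω ∈ Γ, σ ≠ ω → ¬ σ <+: ω) ∧
    ∀ τ : ℕ → Fin N, AdmInf P τ → (∀ h, τ h ∈ H) → τ 0 = i →
      ∃ k : ℕ, 0 < k ∧ (List.range k).map τ ∈ Γ

/-- The `n`-th quantization error of order `r` for a measure on `ℝ^q`. -/
noncomputable def quantErr {q : ℕ} (ν : Measure (EuclideanSpace ℝ (Fin q))) (r : ℝ)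
    (n : ℕ) : ℝ :=
  sInf {e : ℝ | ∃ α : Finset (EuclideanSpace ℝ (Fin q)), α.Nonempty ∧ α.card ≤ n ∧
    e = (∫ x, Metric.infDist x (↑α : Set (EuclideanSpace ℝ (Fin q))) ^ r ∂ν) ^ (1 / r)}

/-- The `s`-dimensional upper quantization coefficient of order `r`,
`limsup_n n^{r/s} e_{n,r}^r`. -/
noncomputable def upperQCoeff {q : ℕ} (ν : Measure (EuclideanSpace ℝ (Fin q)))
    (r s : ℝ) : ℝ≥0∞ :=
  Filter.limsup (fun n : ℕ => ENNReal.ofReal ((n : ℝ) ^ (r / s) * quantErr ν r n ^ r))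
    Filter.atTop

/-- The `s`-dimensional lower quantization coefficient of order `r`,
`liminf_n n^{r/s} e_{n,r}^r`. -/
noncomputable def lowerQCoeff {q : ℕ} (ν : Measure (EuclideanSpace ℝ (Fin q)))
    (r s : ℝ) : ℝ≥0∞ :=
  Filter.liminf (fun n : ℕ => ENNReal.ofReal ((n : ℝ) ^ (r / s) * quantErr ν r n ^ r))
    Filter.atTop

/-- The upper quantization dimension of order `r`. -/
noncomputable def upperQDim {q : ℕ} (ν : Measure (EuclideanSpace ℝ (Fin q))) (r : ℝ) : ℝ :=
  Filter.limsup (fun n : ℕ => Real.log n / (- Real.log (quantErr ν r n))) Filter.atTop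

/-- The lower quantization dimension of order `r`. -/
noncomputable def lowerQDim {q : ℕ} (ν : Measure (EuclideanSpace ℝ (Fin q))) (r : ℝ) : ℝ :=
  Filter.liminf (fun n : ℕ => Real.log n / (- Real.log (quantErr ν r n))) Filter.atTop

/-- `η = min {p_{ij} c_{ij}^r : p_{ij} > 0}`. -/
noncomputable def eta {N : ℕ} (P c : Matrix (Fin N) (Fin N) ℝ) (r : ℝ) : ℝ :=
  sInf {x : ℝ | ∃ i j, 0 < P i j ∧ x = P i j * c i j ^ r}

/-- The finite maximal antichain `Λ_{j,r}`. -/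
def Lambda {N : ℕ} (P c : Matrix (Fin N) (Fin N) ℝ) (r : ℝ) (j : ℕ) : Set (List (Fin N)) :=
  {σ | σ ≠ [] ∧ Adm P σ ∧
    eta P c r ^ j ≤ wprod P σ.dropLast * wprod c σ.dropLast ^ r ∧
    wprod P σ * wprod c σ ^ r < eta P c r ^ j}

/-- `φ_{j,r}`, the cardinality of `Λ_{j,r}`. -/
noncomputable def phi {N : ℕ} (P c : Matrix (Fin N) (Fin N) ℝ) (r : ℝ) (j : ℕ) : ℕ :=
  (Lambda P c r j).ncard

end QM

/- ===================== Auxiliary development ===================== -/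

open Matrix List

namespace QMProof

open Polynomial in
theorem spectrum_iff_root' {N : ℕ} (M : Matrix (Fin N) (Fin N) ℂ) (z : ℂ) :
    z ∈ spectrum ℂ M ↔ M.charpoly.IsRoot z := by
  rw [spectrum.mem_iff]
  have h1 : M.charpoly.eval z = (algebraMap ℂ (Matrix (Fin N) (Fin N) ℂ) z - M).det := by
    rw [Matrix.charpoly, ← Polynomial.coe_evalRingHom, RingHom.map_det]
    congr 1
    ext i j
    by_cases h : i = j <;>
      simp [h, Matrix.charmatrix_apply, Matrix.algebraMap_eq_diagonal, Matrix.diagonal_apply,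
        Matrix.sub_apply, Matrix.map_apply]
  rw [Polynomial.IsRoot, h1]
  constructor
  · intro h
    by_contra hdet
    exact h ((Matrix.isUnit_iff_isUnit_det _).2 (isUnit_iff_ne_zero.2 hdet))
  · intro h hu
    exact isUnit_iff_ne_zero.1 ((Matrix.isUnit_iff_isUnit_det _).1 hu) h

section Perron
variable {N : ℕ} (A : Matrix (Fin N) (Fin N) ℝ)

lemma pow_entry_nonneg' (hA0 : ∀ i j, 0 ≤ A i j) : ∀ (k : ℕ) (i j : Fin N), 0 ≤ (A ^ k) i j := by
  intro k
  induction k with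
  | zero => intro i j; by_cases h : i = j <;> simp [Matrix.one_apply, h]
  | succ k ih =>
    intro i j
    rw [pow_succ, Matrix.mul_apply]
    exact Finset.sum_nonneg fun l _ => mul_nonneg (ih i l) (hA0 l j)

lemma reach_pow_pos' (hA0 : ∀ i j, 0 ≤ A i j) {i j : Fin N}
    (h : Relation.TransGen (fun a b => 0 < A a b) i j) : ∃ m, 0 < m ∧ 0 < (A ^ m) i j := by
  induction h with
  | @single b h => exact ⟨1, one_pos, by simpa using h⟩
  | @tail b c hab hbc ih =>
    obtain ⟨m, hm, hpos⟩ := ih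
    refine ⟨m + 1, by omega, ?_⟩
    rw [pow_succ, Matrix.mul_apply]
    exact Finset.sum_pos' (fun l _ => mul_nonneg (pow_entry_nonneg' A hA0 m _ l) (hA0 l _))
      ⟨b, Finset.mem_univ b, mul_pos hpos hbc⟩

theorem perron' (hN : 0 < N)
    (hA0 : ∀ i j, 0 ≤ A i j)
    (hirrA : ∀ i j : Fin N, Relation.TransGen (fun a b => 0 < A a b) i j)
    (hrad : sSup {x : ℝ | ∃ z : ℂ,
      Module.End.HasEigenvalue (Matrix.toLin' (A.map (fun t => (t : ℂ)))) z ∧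
        x = ‖z‖} = 1) :
    ∃ w : Fin N → ℝ, (∀ i, 0 < w i) ∧ A *ᵥ w = w := by
  classical
  have hNe : Nonempty (Fin N) := ⟨⟨0, hN⟩⟩
  have hNt : Nontrivial (Fin N → ℂ) := by infer_instance
  set Aℂ := A.map (fun t => (t : ℂ)) with hACdef
  set Sev := {x : ℝ | ∃ z : ℂ,
    Module.End.HasEigenvalue (Matrix.toLin' Aℂ) z ∧ x = ‖z‖} with hSevdef
  have hEig : ∀ z : ℂ, Module.End.HasEigenvalue (Matrix.toLin' Aℂ) z ↔ z ∈ spectrum ℂ Aℂ := by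
    intro z
    rw [Module.End.hasEigenvalue_iff_mem_spectrum]
    have : (Matrix.toLin' Aℂ) = Matrix.toLinAlgEquiv' Aℂ := rfl
    rw [this, AlgEquiv.spectrum_eq Matrix.toLinAlgEquiv' Aℂ]
  have hSevImg : Sev = (fun z : ℂ => ‖z‖) '' (spectrum ℂ Aℂ) := by
    ext x
    constructor
    · rintro ⟨z, hz, rfl⟩; exact ⟨z, (hEig z).1 hz, rfl⟩
    · rintro ⟨z, hz, rfl⟩; exact ⟨z, (hEig z).2 hz, rfl⟩
  have hspecfin : {z : ℂ | z ∈ spectrum ℂ Aℂ}.Finite := by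
    have hne : Aℂ.charpoly ≠ 0 := (Matrix.charpoly_monic Aℂ).ne_zero
    exact Set.Finite.subset (Polynomial.finite_setOf_isRoot hne)
      (fun z hz => (spectrum_iff_root' Aℂ z).1 hz)
  have hSevFin : Sev.Finite := by
    rw [hSevImg]; exact Set.Finite.image _ hspecfin
  have hSevNe : Sev.Nonempty := by
    obtain ⟨z, hz⟩ := Module.End.exists_eigenvalue (Matrix.toLin' Aℂ)
    exact ⟨‖z‖, z, hz, rfl⟩
  have hub : ∀ z ∈ spectrum ℂ Aℂ, ‖z‖ ≤ 1 := by
    intro z hz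
    have : ‖z‖ ∈ Sev := ⟨z, (hEig z).2 hz, rfl⟩
    calc ‖z‖ ≤ sSup Sev := le_csSup hSevFin.bddAbove this
    _ = 1 := hrad
  have hmem1 : (1 : ℝ) ∈ Sev := by
    rw [← hrad]; exact hSevNe.csSup_mem hSevFin
  obtain ⟨z, hzspec, hzabs⟩ : ∃ z, z ∈ spectrum ℂ Aℂ ∧ ‖z‖ = 1 := by
    rw [hSevImg] at hmem1; obtain ⟨z, hz, h⟩ := hmem1; exact ⟨z, hz, h⟩
  obtain ⟨u, hu⟩ := ((hEig z).2 hzspec).exists_hasEigenvector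
  have huvec : Aℂ *ᵥ u = z • u := by
    have := hu.apply_eq_smul
    rwa [Matrix.toLin'_apply] at this
  have hune : u ≠ 0 := hu.right
  -- the nonnegative sub-eigenvector
  set x : Fin N → ℝ := fun i => ‖u i‖ with hxdef
  have hx0 : ∀ i, 0 ≤ x i := fun i => norm_nonneg _
  have hxne : x ≠ 0 := by
    intro h
    apply hune
    funext i
    have := congrFun h i
    simpa [hxdef] using this
  have hsub : ∀ i, x i ≤ (A *ᵥ x) i := by
    intro i
    have h1 : (A *ᵥ x) i = ∑ j, ‖(Aℂ i j) * u j‖ := by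
      simp only [Matrix.mulVec, dotProduct]
      refine Finset.sum_congr rfl fun j _ => ?_
      show A i j * ‖u j‖ = ‖Aℂ i j * u j‖
      rw [show Aℂ i j = ((A i j : ℝ) : ℂ) from rfl, norm_mul,
        Complex.norm_of_nonneg (hA0 i j)]
    have h2 : ‖(Aℂ *ᵥ u) i‖ ≤ ∑ j, ‖(Aℂ i j) * u j‖ := by
      simp only [Matrix.mulVec, dotProduct]
      exact norm_sum_le _ _
    have h3 : ‖(Aℂ *ᵥ u) i‖ = x i := by
      rw [huvec]
      simp [hxdef, hzabs]
    rw [h1, ← h3] at *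
    exact h2
  -- the positive power-sum matrix B
  have hm : ∀ i j : Fin N, ∃ m, 0 < m ∧ 0 < (A ^ m) i j := fun i j =>
    reach_pow_pos' A hA0 (hirrA i j)
  choose m hm1 hm2 using hm
  set Mx := Finset.univ.sup (fun p : Fin N × Fin N => m p.1 p.2) with hMx
  set B := ∑ k ∈ Finset.range (Mx + 1), A ^ k with hBdef
  have hB0 : ∀ i j, 0 ≤ B i j := by
    intro i j
    rw [hBdef, Matrix.sum_apply]
    exact Finset.sum_nonneg fun k _ => pow_entry_nonneg' A hA0 k i j
  have hBpos : ∀ i j, 0 < B i j := by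
    intro i j
    rw [hBdef, Matrix.sum_apply]
    refine Finset.sum_pos' (fun k _ => pow_entry_nonneg' A hA0 k i j) ⟨m i j, ?_, hm2 i j⟩
    simp only [Finset.mem_range]
    have : m i j ≤ Mx := Finset.le_sup (f := fun p : Fin N × Fin N => m p.1 p.2)
      (Finset.mem_univ (i, j))
    omega
  have hcomm : A * B = B * A := by
    rw [hBdef, Finset.mul_sum, Finset.sum_mul]
    refine Finset.sum_congr rfl fun k _ => ?_
    rw [← pow_succ, ← pow_succ']
  -- positivity of B *ᵥ v for nonneg nonzero v
  have hBv : ∀ v : Fin N → ℝ, (∀ i, 0 ≤ v i) → v ≠ 0 → ∀ i, 0 < (B *ᵥ v) i := by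
    intro v hv0 hvne i
    obtain ⟨j0, hj0⟩ : ∃ j0, 0 < v j0 := by
      by_contra h
      push_neg at h
      exact hvne (funext fun j => le_antisymm (h j) (hv0 j))
    simp only [Matrix.mulVec, dotProduct]
    exact Finset.sum_pos' (fun j _ => mul_nonneg (hB0 i j) (hv0 j))
      ⟨j0, Finset.mem_univ j0, mul_pos (hBpos i j0) hj0⟩
  -- trace bound
  have htr : ∀ k : ℕ, 0 < k → Matrix.trace (A ^ k) ≤ N := by
    intro k hk
    have hmap : Aℂ ^ k = (A ^ k).map (fun t => (t : ℂ)) := by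
      have : A.map (fun t => (t : ℂ)) = Complex.ofRealHom.mapMatrix A := rfl
      rw [hACdef, this, ← map_pow]
      rfl
    have htrc : Matrix.trace (Aℂ ^ k) = ((Matrix.trace (A ^ k) : ℝ) : ℂ) := by
      rw [hmap]
      simp [Matrix.trace, Matrix.map_apply, Matrix.diag]
    have h1 : Matrix.trace (Aℂ ^ k) = (Aℂ ^ k).charpoly.roots.sum :=
      Matrix.trace_eq_sum_roots_charpoly (A := Aℂ ^ k)
    have hroot : ∀ ρ ∈ (Aℂ ^ k).charpoly.roots, ‖ρ‖ ≤ 1 := by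
      intro ρ hρ
      have : ρ ∈ spectrum ℂ (Aℂ ^ k) :=
        (spectrum_iff_root' _ ρ).2 (Polynomial.isRoot_of_mem_roots hρ)
      rw [spectrum.map_pow_of_pos Aℂ hk] at this
      obtain ⟨w, hw, rfl⟩ := this
      rw [norm_pow]
      exact pow_le_one₀ (norm_nonneg _) (hub w hw)
    have hcard : (Multiset.card (Aℂ ^ k).charpoly.roots : ℕ) ≤ N := by
      have := Polynomial.card_roots' (Aℂ ^ k).charpoly
      rwa [Matrix.charpoly_natDegree_eq_dim, Fintype.card_fin] at this
    have habs : ‖Matrix.trace (Aℂ ^ k)‖ ≤ N := by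
      rw [h1]
      calc ‖(Aℂ ^ k).charpoly.roots.sum‖
          ≤ ((Aℂ ^ k).charpoly.roots.map (fun x => ‖x‖)).sum := by
            exact norm_multiset_sum_le (Aℂ ^ k).charpoly.roots
        _ ≤ (Multiset.card ((Aℂ ^ k).charpoly.roots.map (fun x => ‖x‖))) • (1 : ℝ) := by
            refine Multiset.sum_le_card_nsmul _ _ ?_
            intro y hy
            obtain ⟨ρ, hρ, rfl⟩ := Multiset.mem_map.1 hy
            exact hroot ρ hρ
        _ ≤ N := by
            rw [Multiset.card_map, nsmul_eq_mul, mul_one]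
            exact_mod_cast hcard
    rw [htrc] at habs
    calc Matrix.trace (A ^ k) ≤ |Matrix.trace (A ^ k)| := le_abs_self _
      _ = ‖((Matrix.trace (A ^ k) : ℝ) : ℂ)‖ := by rw [Complex.norm_real, Real.norm_eq_abs]
      _ ≤ N := habs
  -- main claim : A *ᵥ x = x
  have hfix : A *ᵥ x = x := by
    by_contra hne
    set d : Fin N → ℝ := fun i => (A *ᵥ x) i - x i with hddef
    have hd0 : ∀ i, 0 ≤ d i := fun i => sub_nonneg.2 (hsub i)
    have hdne : d ≠ 0 := by
      intro h
      apply hne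
      funext i
      have := congrFun h i
      simp only [hddef, Pi.zero_apply, sub_eq_zero] at this
      exact this
    set w0 := B *ᵥ x with hw0def
    have hw0 : ∀ i, 0 < w0 i := hBv x hx0 hxne
    set dl := B *ᵥ d with hdldef
    have hdl : ∀ i, 0 < dl i := hBv d hd0 hdne
    have hAw0 : A *ᵥ w0 = w0 + dl := by
      rw [hw0def, Matrix.mulVec_mulVec, hcomm, ← Matrix.mulVec_mulVec]
      have : A *ᵥ x = x + d := by funext i; simp [hddef]
      rw [this, Matrix.mulVec_add]
    clear_value w0 dl
    set ε := Finset.univ.inf' (Finset.univ_nonempty) (fun i => dl i / w0 i) with hεdef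
    have hε : 0 < ε := by
      rw [hεdef, Finset.lt_inf'_iff]
      exact fun i _ => div_pos (hdl i) (hw0 i)
    have hgrow : ∀ i, (1 + ε) * w0 i ≤ (A *ᵥ w0) i := by
      intro i
      have h1 : ε ≤ dl i / w0 i := Finset.inf'_le _ (Finset.mem_univ i)
      have h2 : ε * w0 i ≤ dl i := by
        rw [← div_mul_cancel₀ (dl i) (ne_of_gt (hw0 i))]
        exact mul_le_mul_of_nonneg_right h1 (le_of_lt (hw0 i))
      rw [hAw0]
      simp only [Pi.add_apply]
      nlinarith [hw0 i]
    have hpow : ∀ n : ℕ, ∀ i, (1 + ε) ^ n * w0 i ≤ ((A ^ n) *ᵥ w0) i := by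
      intro n
      induction n with
      | zero => intro i; simp [Matrix.one_mulVec]
      | succ n ih =>
        intro i
        have h1 : ((A ^ (n+1)) *ᵥ w0) i = (A *ᵥ ((A ^ n) *ᵥ w0)) i := by
          rw [Matrix.mulVec_mulVec, ← pow_succ']
        rw [h1]
        have h2 : ∀ j, (1 + ε) ^ n * w0 j ≤ ((A ^ n) *ᵥ w0) j := ih
        have h3 : (A *ᵥ (fun j => (1 + ε) ^ n * w0 j)) i ≤ (A *ᵥ ((A ^ n) *ᵥ w0)) i := by
          simp only [Matrix.mulVec, dotProduct]
          exact Finset.sum_le_sum fun j _ => mul_le_mul_of_nonneg_left (h2 j) (hA0 i j)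
        have h4 : (A *ᵥ (fun j => (1 + ε) ^ n * w0 j)) i = (1 + ε) ^ n * (A *ᵥ w0) i := by
          simp only [Matrix.mulVec, dotProduct, Finset.mul_sum]
          exact Finset.sum_congr rfl fun j _ => by ring
        calc (1 + ε) ^ (n + 1) * w0 i = (1 + ε) ^ n * ((1 + ε) * w0 i) := by ring
          _ ≤ (1 + ε) ^ n * (A *ᵥ w0) i := by
              exact mul_le_mul_of_nonneg_left (hgrow i) (by positivity)
          _ = (A *ᵥ (fun j => (1 + ε) ^ n * w0 j)) i := h4.symm
          _ ≤ _ := h3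
    -- extract contradiction
    set i0 : Fin N := ⟨0, hN⟩ with hi0
    set wmax := Finset.univ.sup' Finset.univ_nonempty w0 with hwmax
    have hwmaxpos : 0 < wmax := lt_of_lt_of_le (hw0 i0) (Finset.le_sup' _ (Finset.mem_univ i0))
    set β := Finset.univ.inf' Finset.univ_nonempty (fun j => (A ^ (m j i0)) j i0) with hβdef
    have hβ : 0 < β := by
      rw [hβdef, Finset.lt_inf'_iff]
      exact fun j _ => hm2 j i0
    -- choose n large
    obtain ⟨n, hn⟩ := pow_unbounded_of_one_lt (N * N * wmax / (w0 i0 * β)) (by linarith : (1:ℝ) < 1 + ε)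
    -- row sum bound
    have hrow : (1 + ε) ^ n * w0 i0 ≤ ∑ j, (A ^ n) i0 j * wmax := by
      calc (1 + ε) ^ n * w0 i0 ≤ ((A ^ n) *ᵥ w0) i0 := hpow n i0
        _ = ∑ j, (A ^ n) i0 j * w0 j := rfl
        _ ≤ ∑ j, (A ^ n) i0 j * wmax := by
            refine Finset.sum_le_sum fun j _ => ?_
            exact mul_le_mul_of_nonneg_left (Finset.le_sup' _ (Finset.mem_univ j))
              (pow_entry_nonneg' A hA0 n i0 j)
    obtain ⟨j, hj⟩ : ∃ j, (1 + ε) ^ n * w0 i0 / (N * wmax) ≤ (A ^ n) i0 j := by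
      by_contra h
      push_neg at h
      have : ∑ j, (A ^ n) i0 j * wmax < ∑ _j : Fin N, ((1 + ε) ^ n * w0 i0 / (N * wmax)) * wmax := by
        refine Finset.sum_lt_sum_of_nonempty Finset.univ_nonempty fun j _ => ?_
        exact mul_lt_mul_of_pos_right (h j) hwmaxpos
      rw [Finset.sum_const, Finset.card_univ, Fintype.card_fin] at this
      have hNpos : (0:ℝ) < N := by exact_mod_cast hN
      have : ∑ j, (A ^ n) i0 j * wmax < (1 + ε) ^ n * w0 i0 := by
        rw [nsmul_eq_mul] at this
        calc ∑ j, (A ^ n) i0 j * wmax < N * ((1 + ε) ^ n * w0 i0 / (N * wmax) * wmax) := this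
          _ = (1 + ε) ^ n * w0 i0 := by field_simp
      linarith [hrow]
    -- close the loop
    set k := n + m j i0 with hkdef
    have hdiag : (1 + ε) ^ n * w0 i0 / (N * wmax) * β ≤ (A ^ k) i0 i0 := by
      have h1 : (A ^ k) i0 i0 = ∑ l, (A ^ n) i0 l * (A ^ (m j i0)) l i0 := by
        rw [hkdef, pow_add, Matrix.mul_apply]
      rw [h1]
      have h2 : (A ^ n) i0 j * (A ^ (m j i0)) j i0 ≤ ∑ l, (A ^ n) i0 l * (A ^ (m j i0)) l i0 :=
        Finset.single_le_sum (f := fun l => (A ^ n) i0 l * (A ^ (m j i0)) l i0)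
          (fun l _ => mul_nonneg (pow_entry_nonneg' A hA0 n i0 l) (pow_entry_nonneg' A hA0 _ l i0))
          (Finset.mem_univ j)
      refine le_trans ?_ h2
      have hββ : β ≤ (A ^ (m j i0)) j i0 := Finset.inf'_le _ (Finset.mem_univ j)
      calc (1 + ε) ^ n * w0 i0 / (N * wmax) * β ≤ (A ^ n) i0 j * β := by
            exact mul_le_mul_of_nonneg_right hj (le_of_lt hβ)
        _ ≤ (A ^ n) i0 j * (A ^ (m j i0)) j i0 := by
            exact mul_le_mul_of_nonneg_left hββ (pow_entry_nonneg' A hA0 n i0 j)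
    have htrk : (A ^ k) i0 i0 ≤ Matrix.trace (A ^ k) := by
      rw [Matrix.trace]
      exact Finset.single_le_sum (f := fun i => (A ^ k) i i)
        (fun i _ => pow_entry_nonneg' A hA0 k i i) (Finset.mem_univ i0)
    have hkpos : 0 < k := by rw [hkdef]; have := hm1 j i0; omega
    have hcontr : (1 + ε) ^ n * w0 i0 / (N * wmax) * β ≤ N :=
      le_trans hdiag (le_trans htrk (htr k hkpos))
    -- arithmetic contradiction
    have hNpos : (0:ℝ) < N := by exact_mod_cast hN
    have hNwpos : (0:ℝ) < N * wmax := mul_pos hNpos hwmaxpos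
    have e1 : (1 + ε) ^ n * (w0 i0 * β) ≤ N * N * wmax := by
      have h := mul_le_mul_of_nonneg_right hcontr (le_of_lt hNwpos)
      calc (1 + ε) ^ n * (w0 i0 * β)
          = (1 + ε) ^ n * w0 i0 / (N * wmax) * β * (N * wmax) := by field_simp
        _ ≤ N * (N * wmax) := h
        _ = N * N * wmax := by ring
    have e2 : N * N * wmax < (1 + ε) ^ n * (w0 i0 * β) :=
      (div_lt_iff₀ (mul_pos (hw0 i0) hβ)).1 hn
    linarith
  -- conclude
  refine ⟨B *ᵥ x, hBv x hx0 hxne, ?_⟩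
  rw [Matrix.mulVec_mulVec, hcomm, ← Matrix.mulVec_mulVec, hfix]

end Perron

section Words

variable {N : ℕ}

lemma wprod_nil (M : Matrix (Fin N) (Fin N) ℝ) : QM.wprod M [] = 1 := by simp [QM.wprod]

lemma wprod_single (M : Matrix (Fin N) (Fin N) ℝ) (a : Fin N) : QM.wprod M [a] = 1 := by
  simp [QM.wprod]

lemma wprod_cons (M : Matrix (Fin N) (Fin N) ℝ) (a b : Fin N) (l : List (Fin N)) :
    QM.wprod M (a :: b :: l) = M a b * QM.wprod M (b :: l) := by
  simp [QM.wprod]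

lemma getLastD_irrel {α : Type*} : ∀ (l : List α) (_ : l ≠ []) (d d' : α),
    l.getLastD d = l.getLastD d'
  | [], h, _, _ => absurd rfl h
  | _ :: _, _, d, d' => by rw [List.getLastD_cons, List.getLastD_cons]

lemma wprod_append_singleton (M : Matrix (Fin N) (Fin N) ℝ) (d : Fin N) :
    ∀ (σ : List (Fin N)) (_ : σ ≠ []) (j : Fin N),
      QM.wprod M (σ ++ [j]) = QM.wprod M σ * M (σ.getLastD d) j
  | [], h, _ => absurd rfl h
  | [a], _, j => by simp [QM.wprod]
  | a :: b :: l, _, j => by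
    have IH := wprod_append_singleton M d (b :: l) (by simp) j
    have h1 : (a :: b :: l) ++ [j] = a :: b :: (l ++ [j]) := by simp
    rw [h1]
    have h2 : QM.wprod M (a :: b :: (l ++ [j])) = M a b * QM.wprod M (b :: (l ++ [j])) :=
      wprod_cons M a b (l ++ [j])
    rw [h2, show (b :: (l ++ [j])) = (b :: l) ++ [j] by simp, IH, wprod_cons]
    have h3 : (b :: l).getLastD d = (a :: b :: l).getLastD d := by simp
    rw [h3]
    ring

lemma chain'_iff_pairs {α : Type*} {R : α → α → Prop} :
    ∀ (l : List α), l.Chain' R ↔ ∀ p ∈ l.zip l.tail, R p.1 p.2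
  | [] => by simp [List.Chain', List.isChain_nil]
  | [a] => by simp [List.Chain', List.isChain_singleton]
  | a :: b :: l => by
    show List.IsChain R (a :: b :: l) ↔ _
    rw [List.isChain_cons_cons]
    change (R a b ∧ List.Chain' R (b :: l)) ↔ _
    rw [chain'_iff_pairs (b :: l)]
    constructor
    · rintro ⟨h1, h2⟩ p hp
      simp only [List.tail, List.zip_cons_cons, List.mem_cons] at hp
      rcases hp with rfl | hp
      · exact h1
      · exact h2 p hp
    · intro h
      refine ⟨h (a, b) (by simp [List.zip_cons_cons]), fun p hp => h p ?_⟩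
      simp only [List.tail, List.zip_cons_cons, List.mem_cons]
      exact Or.inr hp

end Words

section Tree

variable {N : ℕ} (A : Matrix (Fin N) (Fin N) ℝ) (w : Fin N → ℝ) (d : Fin N)

/-- Weight of a word: product of matrix entries times Perron weight at the end. -/
noncomputable def wt (σ : List (Fin N)) : ℝ := QM.wprod A σ * w (σ.getLastD d)

lemma wt_step (hAw : ∀ i, ∑ j, A i j * w j = w i) (σ : List (Fin N)) (hσ : σ ≠ []) :
    ∑ j, wt A w d (σ ++ [j]) = wt A w d σ := by
  have h1 : ∀ j, wt A w d (σ ++ [j]) = QM.wprod A σ * (A (σ.getLastD d) j * w j) := by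
    intro j
    unfold wt
    rw [wprod_append_singleton A d σ hσ j]
    have : (σ ++ [j]).getLastD d = j := List.getLastD_concat
    rw [this]; ring
  rw [Finset.sum_congr rfl fun j _ => h1 j, ← Finset.mul_sum, hAw]
  rfl

lemma sum_ext (hAw : ∀ i, ∑ j, A i j * w j = w i) :
    ∀ (m : ℕ) (σ : List (Fin N)) (_ : σ ≠ []),
      ∑ f : Fin m → Fin N, wt A w d (σ ++ List.ofFn f) = wt A w d σ := by
  intro m
  induction m with
  | zero => intro σ hσ; simp
  | succ m ih =>
    intro σ hσ
    have e : ∀ f : Fin (m + 1) → Fin N,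
        σ ++ List.ofFn f = (σ ++ [f 0]) ++ List.ofFn (fun i : Fin m => f i.succ) := by
      intro f
      rw [List.ofFn_succ]
      simp
    calc ∑ f : Fin (m + 1) → Fin N, wt A w d (σ ++ List.ofFn f)
        = ∑ f : Fin (m + 1) → Fin N,
            wt A w d ((σ ++ [f 0]) ++ List.ofFn (fun i : Fin m => f i.succ)) := by
          exact Finset.sum_congr rfl fun f _ => by rw [e f]
      _ = ∑ p : Fin N × (Fin m → Fin N),
            wt A w d ((σ ++ [p.1]) ++ List.ofFn p.2) := by
          apply Fintype.sum_equiv (Fin.consEquiv (fun _ => Fin N)).symm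
          intro f
          rfl
      _ = ∑ j : Fin N, ∑ g : Fin m → Fin N, wt A w d ((σ ++ [j]) ++ List.ofFn g) := by
          rw [Fintype.sum_prod_type]
      _ = ∑ j : Fin N, wt A w d (σ ++ [j]) := by
          exact Finset.sum_congr rfl fun j _ => ih (σ ++ [j]) (by simp)
      _ = wt A w d σ := wt_step A w d hAw σ hσ

lemma level_sum (hAw : ∀ i, ∑ j, A i j * w j = w i) (n : ℕ) (hn : 0 < n) :
    ∑ f : Fin n → Fin N, wt A w d (List.ofFn f) = ∑ i, w i := by
  obtain ⟨m, rfl⟩ : ∃ m, n = m + 1 := ⟨n - 1, by omega⟩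
  have e : ∀ f : Fin (m + 1) → Fin N,
      List.ofFn f = [f 0] ++ List.ofFn (fun i : Fin m => f i.succ) := by
    intro f; rw [List.ofFn_succ]; simp
  calc ∑ f : Fin (m + 1) → Fin N, wt A w d (List.ofFn f)
      = ∑ f : Fin (m + 1) → Fin N, wt A w d ([f 0] ++ List.ofFn (fun i : Fin m => f i.succ)) :=
        Finset.sum_congr rfl fun f _ => by rw [← e f]
    _ = ∑ p : Fin N × (Fin m → Fin N), wt A w d ([p.1] ++ List.ofFn p.2) := by
        apply Fintype.sum_equiv (Fin.consEquiv (fun _ => Fin N)).symm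
        intro f
        rfl
    _ = ∑ j : Fin N, ∑ g : Fin m → Fin N, wt A w d ([j] ++ List.ofFn g) := by
        rw [Fintype.sum_prod_type]
    _ = ∑ j : Fin N, wt A w d [j] := Finset.sum_congr rfl fun j _ =>
        sum_ext A w d hAw m [j] (by simp)
    _ = ∑ i, w i := by
        refine Finset.sum_congr rfl fun j _ => ?_
        unfold wt
        rw [wprod_single]
        simp

lemma exists_ofFn {α : Type*} (t : List α) (m : ℕ) (h : t.length = m) :
    ∃ g : Fin m → α, List.ofFn g = t := by
  subst h
  exact ⟨t.get, List.ofFn_get t⟩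

end Tree

section Rpow

variable {N : ℕ}

lemma wprod_pos (M : Matrix (Fin N) (Fin N) ℝ) {σ : List (Fin N)}
    (h : ∀ p ∈ σ.zip σ.tail, 0 < M p.1 p.2) : 0 < QM.wprod M σ := by
  unfold QM.wprod
  apply List.prod_pos
  intro x hx
  obtain ⟨p, hp, rfl⟩ := List.mem_map.1 hx
  exact h p hp

lemma adm_rpow_eq (P c : Matrix (Fin N) (Fin N) ℝ) (r s : ℝ) (hr : 0 < r)
    (hc1 : ∀ i j, 0 < P i j → 0 < c i j ∧ c i j < 1) :
    ∀ (σ : List (Fin N)), QM.Adm P σ →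
      (QM.wprod P σ * QM.wprod c σ ^ r) ^ (s / (s + r)) = QM.wprod (QM.AGs P c r s) σ
  | [], _ => by simp [wprod_nil, Real.one_rpow]
  | [a], _ => by simp [wprod_single, Real.one_rpow]
  | a :: b :: l, hadm => by
    obtain ⟨hab, hrest⟩ := List.isChain_cons_cons.1 hadm
    have hpairsP : ∀ p ∈ (b :: l).zip (b :: l).tail, 0 < P p.1 p.2 :=
      (chain'_iff_pairs (b :: l)).1 hrest
    have hP2 : 0 < QM.wprod P (b :: l) := wprod_pos P hpairsP
    have hc2 : 0 < QM.wprod c (b :: l) :=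
      wprod_pos c (fun p hp => (hc1 p.1 p.2 (hpairsP p hp)).1)
    have IH := adm_rpow_eq P c r s hr hc1 (b :: l) hrest
    have hca : 0 < c a b := (hc1 a b hab).1
    rw [wprod_cons P, wprod_cons c, wprod_cons (QM.AGs P c r s), ← IH]
    have e1 : (c a b * QM.wprod c (b :: l)) ^ r
        = c a b ^ r * QM.wprod c (b :: l) ^ r := Real.mul_rpow hca.le hc2.le
    have hAab : QM.AGs P c r s a b = (P a b * c a b ^ r) ^ (s / (s + r)) := by
      simp [QM.AGs, hab]
    rw [e1, hAab]
    have e2 : P a b * QM.wprod P (b :: l) * (c a b ^ r * QM.wprod c (b :: l) ^ r)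
        = (P a b * c a b ^ r) * (QM.wprod P (b :: l) * QM.wprod c (b :: l) ^ r) := by ring
    rw [e2]
    exact Real.mul_rpow (mul_pos hab (Real.rpow_pos_of_pos hca r)).le
      (mul_nonneg hP2.le (Real.rpow_nonneg hc2.le r))

end Rpow

end QMProof

open QM in
theorem antichain_sum_bounded_irred
    {N : ℕ} (hN : 2 ≤ N)
    (P c : Matrix (Fin N) (Fin N) ℝ) (r : ℝ) (hr : 0 < r)
    (hP0 : ∀ i j, 0 ≤ P i j)
    (hProw : ∀ i, ∑ j, P i j = 1)
    (hPcard : ∀ i : Fin N, 2 ≤ {j : Fin N | 0 < P i j}.ncard)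
    (hc1 : ∀ i j, 0 < P i j → 0 < c i j ∧ c i j < 1)
    (hc0 : ∀ i j, P i j = 0 → c i j = 0)
    (hirr : QM.Irred P)
    (sr : ℝ) (hsr : 0 < sr) (hsreq : QM.PsiG P c r sr = 1)
    :
    ∃ δ₁ δ₂ : ℝ, 0 < δ₁ ∧ 0 < δ₂ ∧
      ∀ Γ : Finset (List (Fin N)), QM.IsMaxAntichain P Γ →
        δ₁ ≤ ∑ σ ∈ Γ, (QM.wprod P σ * QM.wprod c σ ^ r) ^ (sr / (sr + r)) ∧
        ∑ σ ∈ Γ, (QM.wprod P σ * QM.wprod c σ ^ r) ^ (sr / (sr + r)) ≤ δ₂ := by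
  classical
  have hNpos : 0 < N := by omega
  set A := QM.AGs P c r sr with hAdef
  have hApos : ∀ i j, 0 < P i j → 0 < A i j := by
    intro i j h
    have hcb := (hc1 i j h).1
    simp only [hAdef, QM.AGs, Matrix.of_apply, if_pos h]
    exact Real.rpow_pos_of_pos (mul_pos h (Real.rpow_pos_of_pos hcb r)) _
  have hA0 : ∀ i j, 0 ≤ A i j := by
    intro i j
    by_cases h : 0 < P i j
    · exact le_of_lt (hApos i j h)
    · simp only [hAdef, QM.AGs, Matrix.of_apply, if_neg h]
      exact le_refl 0
  have hirrA : ∀ i j : Fin N, Relation.TransGen (fun a b => 0 < A a b) i j := by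
    intro i j
    exact Relation.TransGen.mono (r := Edge P) (p := fun a b => 0 < A a b) (fun a b hab => hApos a b hab) i j (hirr i j)
  obtain ⟨w, hwpos, hAweq⟩ := QMProof.perron' A hNpos hA0 hirrA hsreq
  have hAw : ∀ i, ∑ j, A i j * w j = w i := by
    intro i
    have := congrFun hAweq i
    simpa [Matrix.mulVec, dotProduct] using this
  set d0 : Fin N := ⟨0, hNpos⟩ with hd0
  haveI : Nonempty (Fin N) := ⟨d0⟩
  -- out-edges
  have hout : ∀ i : Fin N, ∃ j, 0 < P i j := by
    intro i
    have h2 := hPcard i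
    have hne : {j : Fin N | 0 < P i j}.Nonempty := by
      rcases Set.eq_empty_or_nonempty {j : Fin N | 0 < P i j} with h | h
      · rw [h] at h2; simp at h2
      · exact h
    exact hne
  choose nxt hnxt using hout
  -- extremes of w
  set wmin := Finset.univ.inf' Finset.univ_nonempty w with hwmindef
  set wmax := Finset.univ.sup' Finset.univ_nonempty w with hwmaxdef
  have hwmin : 0 < wmin := by
    rw [hwmindef, Finset.lt_inf'_iff]
    exact fun i _ => hwpos i
  have hwminle : ∀ i, wmin ≤ w i := fun i => Finset.inf'_le _ (Finset.mem_univ i)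
  have hwmaxle : ∀ i, w i ≤ wmax := fun i => Finset.le_sup' _ (Finset.mem_univ i)
  have hwmax : 0 < wmax := lt_of_lt_of_le (hwpos d0) (hwmaxle d0)
  set S := ∑ i, w i with hSdef
  have hSpos : 0 < S := Finset.sum_pos (fun i _ => hwpos i) Finset.univ_nonempty
  refine ⟨S / wmax, S / wmin, div_pos hSpos hwmax, div_pos hSpos hwmin, ?_⟩
  intro Γ hΓ
  obtain ⟨hΓ1, hΓ2, hΓ3⟩ := hΓ
  set n := Γ.sup List.length with hndef
  have hlen : ∀ σ ∈ Γ, σ.length ≤ n := fun σ hσ => Finset.le_sup hσ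
  have hΓne : Γ.Nonempty := by
    set τ0 : ℕ → Fin N := fun k => nxt^[k] d0 with hτ0
    have hτ0adm : QM.AdmInf P τ0 := by
      intro h
      rw [hτ0]
      simp only
      rw [Function.iterate_succ_apply']
      exact hnxt _
    obtain ⟨k, _, hmem⟩ := hΓ3 τ0 hτ0adm
    exact ⟨_, hmem⟩
  have hn1 : 1 ≤ n := by
    obtain ⟨σ0, hσ0⟩ := hΓne
    have h1 := (hΓ1 σ0 hσ0).1
    have h2 := hlen σ0 hσ0
    have : 1 ≤ σ0.length := List.length_pos_iff.2 h1
    omega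
  -- every admissible word of length n has a prefix in Γ
  have hprefix : ∀ L : List (Fin N), L.length = n → QM.Adm P L → ∃ ω ∈ Γ, ω <+: L := by
    intro L hLlen hLadm
    have hLne : L ≠ [] := by
      intro h
      rw [h] at hLlen
      simp at hLlen
      omega
    set τ : ℕ → Fin N := fun k =>
      if h : k < L.length then L.get ⟨k, h⟩
      else nxt^[k + 1 - L.length] (L.getLast hLne) with hτdef
    have hτeq : ∀ (k : ℕ) (h : k < L.length), τ k = L.get ⟨k, h⟩ := fun k h => dif_pos h
    have hadm' := List.isChain_iff_getElem.1 hLadm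
    have hτadm : QM.AdmInf P τ := by
      intro h
      by_cases h1 : h + 1 < L.length
      · have h2 : h < L.length := by omega
        rw [hτeq h h2, hτeq (h+1) h1]
        exact hadm' h (by omega)
      · by_cases h2 : h + 1 = L.length
        · have h3 : h < L.length := by omega
          rw [hτeq h h3]
          have hτ1 : τ (h+1) = nxt (L.getLast hLne) := by
            rw [hτdef]
            simp only
            rw [dif_neg (by omega)]
            have he : h + 1 + 1 - L.length = 1 := by omega
            rw [he, Function.iterate_one]
          rw [hτ1]
          have hlast : L.getLast hLne = L.get ⟨h, h3⟩ := by
            rw [List.getLast_eq_getElem, List.get_eq_getElem]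
            congr 1
            dsimp only
            omega
          rw [hlast]
          exact hnxt _
        · have h3 : ¬ h < L.length := by omega
          have hτh : τ h = nxt^[h + 1 - L.length] (L.getLast hLne) := dif_neg h3
          have hτh1 : τ (h+1) = nxt^[h + 1 + 1 - L.length] (L.getLast hLne) := dif_neg (by omega)
          rw [hτh, hτh1]
          have he : h + 1 + 1 - L.length = (h + 1 - L.length) + 1 := by omega
          rw [he, Function.iterate_succ_apply']
          exact hnxt _
    obtain ⟨k, hk0, hkΓ⟩ := hΓ3 τ hτadm
    refine ⟨(List.range k).map τ, hkΓ, ?_⟩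
    have hkn : k ≤ n := by
      have h1 := hlen _ hkΓ
      simpa using h1
    have hLeq : L = (List.range n).map τ := by
      apply List.ext_get
      · simp [hLlen]
      · intro i h1 h2
        have h3 : i < n := by simpa using h2
        have h4 : i < L.length := h1
        simp only [List.get_eq_getElem, List.getElem_map, List.getElem_range]
        exact (hτeq i h4).symm
    rw [hLeq]
    refine List.IsPrefix.map τ ?_
    rw [List.prefix_iff_eq_take, List.take_range]
    simp [hkn]
  -- the level-n decomposition
  set wtf := QMProof.wt A w d0 with hwtf
  have hwt : ∀ σ, wtf σ = QM.wprod A σ * w (σ.getLastD d0) := fun σ => rfl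
  set S0 : Finset (List (Fin N)) :=
    (Finset.univ : Finset (Fin n → Fin N)).image List.ofFn with hS0def
  have hS0len : ∀ τ ∈ S0, τ.length = n := by
    intro τ hτ
    obtain ⟨f, _, rfl⟩ := Finset.mem_image.1 hτ
    simp
  have hS0sum : ∑ τ ∈ S0, wtf τ = S := by
    rw [hS0def, Finset.sum_image (fun f _ g _ h => List.ofFn_injective h)]
    exact QMProof.level_sum A w d0 hAw n (by omega)
  -- non-admissible words have weight zero
  have hadm_of_ne : ∀ τ : List (Fin N), wtf τ ≠ 0 → QM.Adm P τ := by
    intro τ hne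
    by_contra hadm
    apply hne
    rw [hwt]
    have h0 : QM.wprod A τ = 0 := by
      unfold QM.Adm at hadm
      rw [QMProof.chain'_iff_pairs] at hadm
      push_neg at hadm
      obtain ⟨p, hp, hneg⟩ := hadm
      unfold QM.wprod
      apply List.prod_eq_zero
      refine List.mem_map.2 ⟨p, hp, ?_⟩
      show A p.1 p.2 = 0
      simp [hAdef, QM.AGs, hneg]
    rw [h0, zero_mul]
  -- fibers
  set fib : List (Fin N) → Finset (List (Fin N)) := fun σ => S0.filter (fun τ => σ <+: τ)
    with hfibdef
  have hfilter : ∑ τ ∈ S0.filter (fun τ => ∃ σ ∈ Γ, σ <+: τ), wtf τ = ∑ τ ∈ S0, wtf τ := by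
    apply Finset.sum_filter_of_ne
    intro τ hτ hwne
    exact hprefix τ (hS0len τ hτ) (hadm_of_ne τ hwne)
  have hbiun : S0.filter (fun τ => ∃ σ ∈ Γ, σ <+: τ) = Γ.biUnion fib := by
    ext τ
    rw [Finset.mem_filter, Finset.mem_biUnion]
    constructor
    · rintro ⟨h1, σ, h2, h3⟩
      exact ⟨σ, h2, Finset.mem_filter.2 ⟨h1, h3⟩⟩
    · rintro ⟨σ, h2, h3⟩
      obtain ⟨h1, h4⟩ := Finset.mem_filter.1 h3
      exact ⟨h1, σ, h2, h4⟩
  have hdisj : (↑Γ : Set (List (Fin N))).PairwiseDisjoint fib := by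
    intro σ1 h1 σ2 h2 hne
    refine Finset.disjoint_left.2 fun τ ht1 ht2 => ?_
    have p1 := (Finset.mem_filter.1 ht1).2
    have p2 := (Finset.mem_filter.1 ht2).2
    rcases List.prefix_or_prefix_of_prefix p1 p2 with h | h
    · exact hΓ2 σ1 h1 σ2 h2 hne h
    · exact hΓ2 σ2 h2 σ1 h1 (Ne.symm hne) h
  have hfib : ∀ σ ∈ Γ, ∑ τ ∈ fib σ, wtf τ = wtf σ := by
    intro σ hσ
    have hσne : σ ≠ [] := (hΓ1 σ hσ).1
    have hσlen : σ.length ≤ n := hlen σ hσ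
    have himg : fib σ =
        (Finset.univ : Finset (Fin (n - σ.length) → Fin N)).image
          (fun g => σ ++ List.ofFn g) := by
      ext τ
      rw [hfibdef]
      simp only [Finset.mem_filter, Finset.mem_image, Finset.mem_univ, true_and]
      constructor
      · rintro ⟨hτS0, hpre⟩
        obtain ⟨tl, rfl⟩ := hpre
        have hlen2 : tl.length = n - σ.length := by
          have := hS0len _ hτS0
          rw [List.length_append] at this
          omega
        obtain ⟨g, hg⟩ := QMProof.exists_ofFn tl (n - σ.length) hlen2
        exact ⟨g, by rw [hg]⟩
      · rintro ⟨g, rfl⟩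
        constructor
        · have hlen3 : (σ ++ List.ofFn g).length = n := by
            rw [List.length_append, List.length_ofFn]
            omega
          obtain ⟨f, hf⟩ := QMProof.exists_ofFn (σ ++ List.ofFn g) n hlen3
          exact Finset.mem_image.2 ⟨f, Finset.mem_univ f, hf⟩
        · exact List.prefix_append σ _
    rw [himg, Finset.sum_image ?_]
    · exact QMProof.sum_ext A w d0 hAw (n - σ.length) σ hσne
    · intro g1 _ g2 _ h
      exact List.ofFn_injective (List.append_cancel_left h)
  have hsumΓ : ∑ σ ∈ Γ, wtf σ = S := by
    calc ∑ σ ∈ Γ, wtf σ = ∑ σ ∈ Γ, ∑ τ ∈ fib σ, wtf τ :=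
          (Finset.sum_congr rfl fun σ hσ => (hfib σ hσ).symm)
      _ = ∑ τ ∈ Γ.biUnion fib, wtf τ := (Finset.sum_biUnion hdisj).symm
      _ = ∑ τ ∈ S0.filter (fun τ => ∃ σ ∈ Γ, σ <+: τ), wtf τ := by rw [hbiun]
      _ = ∑ τ ∈ S0, wtf τ := hfilter
      _ = S := hS0sum
  -- identification of the summands
  have hX : ∀ σ ∈ Γ, (QM.wprod P σ * QM.wprod c σ ^ r) ^ (sr / (sr + r)) = QM.wprod A σ := by
    intro σ hσ
    exact QMProof.adm_rpow_eq P c r sr hr hc1 σ (hΓ1 σ hσ).2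
  have hXpos : ∀ σ ∈ Γ, 0 < QM.wprod A σ := by
    intro σ hσ
    apply QMProof.wprod_pos
    intro p hp
    have := (QMProof.chain'_iff_pairs σ).1 (hΓ1 σ hσ).2 p hp
    exact hApos p.1 p.2 this
  have hsum_eq : ∑ σ ∈ Γ, (QM.wprod P σ * QM.wprod c σ ^ r) ^ (sr / (sr + r))
      = ∑ σ ∈ Γ, QM.wprod A σ := Finset.sum_congr rfl hX
  rw [hsum_eq]
  constructor
  · -- lower bound
    rw [div_le_iff₀ hwmax]
    calc S = ∑ σ ∈ Γ, wtf σ := hsumΓ.symm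
      _ ≤ ∑ σ ∈ Γ, QM.wprod A σ * wmax := by
          refine Finset.sum_le_sum fun σ hσ => ?_
          rw [hwt]
          exact mul_le_mul_of_nonneg_left (hwmaxle _) (le_of_lt (hXpos σ hσ))
      _ = (∑ σ ∈ Γ, QM.wprod A σ) * wmax := by rw [Finset.sum_mul]
  · -- upper bound
    rw [le_div_iff₀ hwmin]
    calc (∑ σ ∈ Γ, QM.wprod A σ) * wmin = ∑ σ ∈ Γ, QM.wprod A σ * wmin := by
          rw [Finset.sum_mul]
      _ ≤ ∑ σ ∈ Γ, wtf σ := by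
          refine Finset.sum_le_sum fun σ hσ => ?_
          rw [hwt]
          exact mul_le_mul_of_nonneg_left (hwminle _) (le_of_lt (hXpos σ hσ))
      _ = S := hsumΓ
end

section
/- Let ζ ∈ (0,1) and let ξ = (ξ_i)_{i=1}^N be a vector with ξ_i > 0 for all i, Σ_{i=1}^N ξ_i = 1, and Σ_{j=1}^N (p_{ij} c_{ij}^r)^ζ ξ_j = ξ_i for every i. Then for every finite maximal antichain Γ ⊂ Ω^*, Σ_{σ∈Γ} (p_σ c_σ^r)^ζ ξ_{σ_{|σ|}} = 1, where σ_{|σ|} is the last letter of σ. -/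
open Filter MeasureTheory
open scoped ENNReal

open QM

namespace QMAux
variable {N : ℕ}

lemma wprod_nil (M : Matrix (Fin N) (Fin N) ℝ) : wprod M [] = 1 := by simp [wprod]

lemma wprod_singleton (M : Matrix (Fin N) (Fin N) ℝ) (a : Fin N) : wprod M [a] = 1 := by
  simp [wprod]

lemma wprod_cons_cons (M : Matrix (Fin N) (Fin N) ℝ) (a b : Fin N) (t : List (Fin N)) :
    wprod M (a :: b :: t) = M a b * wprod M (b :: t) := by
  simp [wprod]

lemma wprod_concat (M : Matrix (Fin N) (Fin N) ℝ) (j d : Fin N) :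
    ∀ l : List (Fin N), l ≠ [] → wprod M (l ++ [j]) = wprod M l * M (l.getLastD d) j := by
  intro l
  induction l with
  | nil => intro h; exact absurd rfl h
  | cons a t ih =>
    intro _
    cases t with
    | nil => simp [wprod_singleton, wprod_cons_cons, List.getLastD_cons]
    | cons b t' =>
      have h := ih (by simp)
      simp only [List.cons_append] at h ⊢
      rw [wprod_cons_cons, wprod_cons_cons M a b t', h, List.getLastD_cons,
        List.getLastD_cons]
      rw [List.getLastD_cons]; ring

lemma wprod_pos (M : Matrix (Fin N) (Fin N) ℝ) :
    ∀ l : List (Fin N), List.Chain' (fun a b => 0 < M a b) l → 0 < wprod M l := by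
  intro l
  induction l with
  | nil => intro _; rw [wprod_nil]; norm_num
  | cons a t ih =>
    intro h
    cases t with
    | nil => rw [wprod_singleton]; norm_num
    | cons b t' =>
      rw [wprod_cons_cons]
      rcases List.isChain_cons_cons.1 h with ⟨h1, h2⟩
      exact mul_pos h1 (ih h2)

lemma exists_admInf_extend (P : Matrix (Fin N) (Fin N) ℝ)
    (hrow : ∀ i : Fin N, ∃ j, 0 < P i j) (l : List (Fin N)) (hl : l ≠ []) (hadm : Adm P l) :
    ∃ τ : ℕ → Fin N, AdmInf P τ ∧ ∀ k ≤ l.length, (List.range k).map τ = l.take k := by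
  classical
  choose nxt hnxt using hrow
  set x := l.getLast hl with hx
  refine ⟨fun n => if h : n < l.length then l.get ⟨n, h⟩ else nxt^[n + 1 - l.length] x, ?_, ?_⟩
  · intro h
    by_cases h1 : h + 1 < l.length
    · have h0 : h < l.length := by omega
      simp only [dif_pos h0, dif_pos h1]
      exact (List.isChain_iff_getElem.1 hadm) h (by omega)
    · by_cases h2 : h < l.length
      · simp only [dif_pos h2, dif_neg h1]
        have h3 : h + 1 + 1 - l.length = 1 := by omega
        rw [h3]
        have hget : l.get ⟨h, h2⟩ = x := by
          have hh : h = l.length - 1 := by omega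
          subst hh
          exact (List.getLast_eq_getElem hl).symm
        rw [hget]
        simpa using hnxt x
      · simp only [dif_neg h2, dif_neg h1]
        have h3 : h + 1 + 1 - l.length = (h + 1 - l.length) + 1 := by omega
        rw [h3, Function.iterate_succ_apply']
        exact hnxt _
  · intro k hk
    apply List.ext_get
    · simp [hk]
    · intro n h1 h2
      have hn : n < k := by simpa using h1
      have hnl : n < l.length := lt_of_lt_of_le hn hk
      simp [dif_pos hnl, List.getElem_take]

lemma main (hN : 2 ≤ N) (P c : Matrix (Fin N) (Fin N) ℝ) (r : ℝ) (hr : 0 < r)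
    (hP0 : ∀ i j, 0 ≤ P i j) (hProw : ∀ i, ∑ j, P i j = 1)
    (hPcard : ∀ i : Fin N, 2 ≤ {j : Fin N | 0 < P i j}.ncard)
    (hc1 : ∀ i j, 0 < P i j → 0 < c i j ∧ c i j < 1)
    (hc0 : ∀ i j, P i j = 0 → c i j = 0)
    (ζ : ℝ) (hζ0 : 0 < ζ)
    (ξ : Fin N → ℝ) (hξpos : ∀ i, 0 < ξ i) (hξsum : ∑ i, ξ i = 1)
    (hξeig : ∀ i, ∑ j, (P i j * c i j ^ r) ^ ζ * ξ j = ξ i)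
    (d : Fin N) :
    ∀ Γ : Finset (List (Fin N)), IsMaxAntichain P Γ →
      ∑ σ ∈ Γ, (wprod P σ * wprod c σ ^ r) ^ ζ * ξ (σ.getLastD d) = 1 := by
  classical
  set f : List (Fin N) → ℝ :=
    fun σ => (wprod P σ * wprod c σ ^ r) ^ ζ * ξ (σ.getLastD d) with hf
  have hrow : ∀ i : Fin N, ∃ j, 0 < P i j := by
    intro i
    by_contra hcon
    push_neg at hcon
    have h0 : ∑ j, P i j = 0 :=
      Finset.sum_eq_zero (fun j _ => le_antisymm (hcon j) (hP0 i j))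
    rw [hProw i] at h0; norm_num at h0
  -- term computation for children
  have hterm : ∀ γ : List (Fin N), γ ≠ [] → Adm P γ → ∀ j : Fin N,
      f (γ ++ [j]) = (wprod P γ * wprod c γ ^ r) ^ ζ
        * ((P (γ.getLastD d) j * c (γ.getLastD d) j ^ r) ^ ζ * ξ j) := by
    intro γ hγ hadm j
    set i := γ.getLastD d with hi
    have hwp : 0 < wprod P γ := wprod_pos P γ hadm
    have hwc : 0 < wprod c γ := wprod_pos c γ (hadm.imp fun a b h => (hc1 a b h).1)
    have e1 : wprod P (γ ++ [j]) = wprod P γ * P i j := wprod_concat P j d γ hγ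
    have e2 : wprod c (γ ++ [j]) = wprod c γ * c i j := wprod_concat c j d γ hγ
    rw [hf]
    simp only [e1, e2, List.getLastD_concat]
    by_cases hj : 0 < P i j
    · have hcij : 0 < c i j := (hc1 i j hj).1
      rw [Real.mul_rpow hwc.le hcij.le]
      have e3 : wprod P γ * P i j * (wprod c γ ^ r * c i j ^ r)
          = (wprod P γ * wprod c γ ^ r) * (P i j * c i j ^ r) := by ring
      rw [e3, Real.mul_rpow (by positivity) (by positivity)]
      ring
    · have hPz : P i j = 0 := le_antisymm (not_lt.1 hj) (hP0 i j)
      have hcz : c i j = 0 := hc0 i j hPz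
      rw [hPz, hcz]
      rw [mul_zero, zero_mul, Real.zero_rpow hζ0.ne', Real.zero_rpow hr.ne',
        mul_zero, Real.zero_rpow hζ0.ne']
      ring
  have child : ∀ γ : List (Fin N), γ ≠ [] → Adm P γ →
      ∑ j : Fin N, f (γ ++ [j]) = f γ := by
    intro γ hγ hadm
    have := hterm γ hγ hadm
    simp only [this]
    rw [← Finset.mul_sum, hξeig (γ.getLastD d)]
  suffices H : ∀ n : ℕ, ∀ Γ : Finset (List (Fin N)), Γ.card ≤ n →
      IsMaxAntichain P Γ → ∑ σ ∈ Γ, f σ = 1 by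
    intro Γ hΓ; exact H Γ.card Γ le_rfl hΓ
  intro n
  induction n with
  | zero =>
    intro Γ hcard hΓ
    exfalso
    obtain ⟨τ, hτ, -⟩ := exists_admInf_extend P hrow [d] (by simp) (List.isChain_singleton d)
    obtain ⟨k, -, hkΓ⟩ := hΓ.2.2 τ hτ
    have : Γ = ∅ := Finset.card_eq_zero.1 (Nat.le_zero.1 hcard)
    rw [this] at hkΓ
    exact absurd hkΓ (Finset.notMem_empty _)
  | succ n ih =>
    intro Γ hcard hΓ
    obtain ⟨hΓ1, hΓ2, hΓ3⟩ := hΓ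
    have hne : Γ.Nonempty := by
      obtain ⟨τ, hτ, -⟩ := exists_admInf_extend P hrow [d] (by simp) (List.isChain_singleton d)
      obtain ⟨k, -, hkΓ⟩ := hΓ3 τ hτ
      exact ⟨_, hkΓ⟩
    set L := (Γ.image List.length).max' (hne.image _) with hLdef
    have hLle : ∀ σ ∈ Γ, σ.length ≤ L := fun σ hσ =>
      Finset.le_max' _ _ (Finset.mem_image_of_mem _ hσ)
    obtain ⟨σ0, hσ0Γ, hσ0len0⟩ :=
      Finset.mem_image.1 (Finset.max'_mem (Γ.image List.length) (hne.image _))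
    have hσ0len : σ0.length = L := by rw [hLdef]; exact hσ0len0
    have hσ0ne : σ0 ≠ [] := (hΓ1 σ0 hσ0Γ).1
    have hL1 : 1 ≤ L := by
      rw [← hσ0len]; exact List.length_pos_iff.2 hσ0ne
    by_cases hL : L ≤ 1
    · -- all words are singletons
      have hΓeq : Γ = Finset.image (fun i : Fin N => [i]) Finset.univ := by
        ext w
        constructor
        · intro hw
          have h1 : w.length = 1 :=
            le_antisymm (le_trans (hLle w hw) hL) (List.length_pos_iff.2 (hΓ1 w hw).1)
          obtain ⟨a, rfl⟩ := List.length_eq_one_iff.1 h1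
          exact Finset.mem_image.2 ⟨a, Finset.mem_univ a, rfl⟩
        · intro hw
          obtain ⟨i, -, rfl⟩ := Finset.mem_image.1 hw
          obtain ⟨τ, hτ, hτtake⟩ :=
            exists_admInf_extend P hrow [i] (by simp) (List.isChain_singleton i)
          obtain ⟨k, hk0, hkΓ⟩ := hΓ3 τ hτ
          have hkle : k ≤ 1 := by
            have h2 := hLle _ hkΓ
            simp only [List.length_map, List.length_range] at h2
            omega
          have hk1 : k = 1 := by omega
          rw [hk1] at hkΓ
          have h3 := hτtake 1 (by simp)
          simp only [List.take] at h3
          rwa [h3] at hkΓ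
      rw [hΓeq, Finset.sum_image (by intro a _ b _ h; simpa using h)]
      have hfs : ∀ i : Fin N, f [i] = ξ i := by
        intro i
        rw [hf]
        simp [wprod_singleton, Real.one_rpow]
      simp only [hfs]
      exact hξsum
    · push_neg at hL
      set γ := σ0.dropLast with hγdef
      have hγlen : γ.length = L - 1 := by
        rw [hγdef, List.length_dropLast, hσ0len]
      have hγne : γ ≠ [] := by
        intro h
        rw [h] at hγlen
        simp at hγlen
        omega
      have hγadm : Adm P γ := (hΓ1 σ0 hσ0Γ).2.prefix (by
        rw [hγdef]
        exact ⟨[σ0.getLast hσ0ne], List.dropLast_append_getLast hσ0ne⟩)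
      have hid : γ.getLastD d = γ.getLast hγne := by
        rw [List.getLastD_eq_getLast?, List.getLast?_eq_getLast hγne]; rfl
      set i := γ.getLastD d with hi
      set x0 := σ0.getLast hσ0ne with hx0
      have hσ0eq : γ ++ [x0] = σ0 := List.dropLast_append_getLast hσ0ne
      have hedge0 : 0 < P i x0 := by
        have hadm0 := (hΓ1 σ0 hσ0Γ).2
        rw [← hσ0eq] at hadm0
        rcases List.isChain_append.1 hadm0 with ⟨-, -, hmid⟩
        exact hmid i (by rw [hid]; exact List.getLast?_eq_getLast hγne) x0 rfl
      set C : Finset (List (Fin N)) :=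
        Finset.image (fun j => γ ++ [j]) (Finset.univ.filter fun j => 0 < P i j) with hC
      have hmemC : ∀ w, w ∈ C ↔ ∃ j, 0 < P i j ∧ w = γ ++ [j] := by
        intro w
        simp only [hC, Finset.mem_image, Finset.mem_filter, Finset.mem_univ, true_and]
        constructor
        · rintro ⟨j, hj, rfl⟩; exact ⟨j, hj, rfl⟩
        · rintro ⟨j, hj, rfl⟩; exact ⟨j, hj, rfl⟩
      have hchildAdm : ∀ j, 0 < P i j → Adm P (γ ++ [j]) := by
        intro j hj
        apply List.isChain_append.2
        refine ⟨hγadm, List.isChain_singleton j, ?_⟩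
        intro x hx y hy
        rw [List.getLast?_eq_getLast hγne, Option.mem_def, Option.some_inj] at hx
        rw [List.head?_cons, Option.mem_def, Option.some_inj] at hy
        rw [← hx, ← hy]
        rwa [hid] at hj
      have hCsub : C ⊆ Γ := by
        intro w hw
        obtain ⟨j, hj, rfl⟩ := (hmemC w).1 hw
        obtain ⟨τ, hτ, hτtake⟩ :=
          exists_admInf_extend P hrow (γ ++ [j]) (by simp) (hchildAdm j hj)
        obtain ⟨k, hk0, hkΓ⟩ := hΓ3 τ hτ
        have hwlen : (γ ++ [j]).length = L := by
          simp [hγlen]; omega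
        have hkle : k ≤ L := by
          have h2 := hLle _ hkΓ
          simpa using h2
        have hwk : (List.range k).map τ = (γ ++ [j]).take k :=
          hτtake k (by rw [hwlen]; exact hkle)
        by_cases hkL : k = L
        · rw [hkL] at hwk hkΓ
          rw [← hwlen] at hwk hkΓ
          rw [List.take_length] at hwk
          rwa [hwk] at hkΓ
        · exfalso
          have hkL' : k < L := lt_of_le_of_ne hkle hkL
          have h1 : (γ ++ [j]).take k = γ.take k :=
            List.take_append_of_le_length (by omega)
          have hpre : (List.range k).map τ <+: σ0 := by
            rw [hwk, h1]
            exact (List.take_prefix k γ).trans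
              (by rw [← hσ0eq]; exact List.prefix_append γ [x0])
          have hne2 : (List.range k).map τ ≠ σ0 := by
            intro h
            apply_fun List.length at h
            simp only [List.length_map, List.length_range, hσ0len] at h
            omega
          exact hΓ2 _ hkΓ _ hσ0Γ hne2 hpre
      have hσ0C : σ0 ∈ C := (hmemC σ0).2 ⟨x0, hedge0, hσ0eq.symm⟩
      have hγpre : γ <+: σ0 := ⟨[x0], hσ0eq⟩
      have hγnotΓ : γ ∉ Γ := by
        intro h
        refine hΓ2 γ h σ0 hσ0Γ ?_ hγpre
        intro he
        rw [he] at hγlen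
        omega
      set Γ' := insert γ (Γ \ C) with hΓ'
      have hCcard : 2 ≤ C.card := by
        rw [hC, Finset.card_image_of_injective _
          (fun a b h => by simpa using h)]
        have h2 := hPcard i
        rw [show {j | 0 < P i j} = ↑(Finset.univ.filter fun j => 0 < P i j) by
          ext t; simp] at h2
        rwa [Set.ncard_coe_finset] at h2
      have hΓ'card : Γ'.card ≤ n := by
        rw [hΓ']
        have h1 : (Γ \ C).card + C.card = Γ.card := Finset.card_sdiff_add_card_eq_card hCsub
        have h2 : C.card ≤ Γ.card := Finset.card_le_card hCsub
        have h3 := Finset.card_insert_le γ (Γ \ C)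
        omega
      have hΓ'mas : IsMaxAntichain P Γ' := by
        refine ⟨?_, ?_, ?_⟩
        · intro w hw
          rcases Finset.mem_insert.1 hw with rfl | hw
          · exact ⟨hγne, hγadm⟩
          · exact hΓ1 w (Finset.mem_sdiff.1 hw).1
        · intro σ hσ ω hω hneq hpre
          rcases Finset.mem_insert.1 hσ with rfl | hσ
          · -- σ = γ
            rcases Finset.mem_insert.1 hω with rfl | hω
            · exact hneq rfl
            · obtain ⟨hωΓ, hωC⟩ := Finset.mem_sdiff.1 hω
              have hωle : ω.length ≤ L := hLle ω hωΓ
              have hlt : γ.length < ω.length := by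
                rcases lt_or_eq_of_le hpre.length_le with h | h
                · exact h
                · exact absurd (hpre.eq_of_length h) hneq
              obtain ⟨t, rfl⟩ := hpre
              have htlen : t.length = 1 := by
                rw [List.length_append] at hωle hlt
                omega
              obtain ⟨x, rfl⟩ := List.length_eq_one_iff.1 htlen
              have hadmω := (hΓ1 _ hωΓ).2
              rcases List.isChain_append.1 hadmω with ⟨-, -, hmid⟩
              have hPx : 0 < P i x :=
                hmid i (by rw [hid]; exact List.getLast?_eq_getLast hγne) x rfl
              exact hωC ((hmemC _).2 ⟨x, hPx, rfl⟩)
          · obtain ⟨hσΓ, hσC⟩ := Finset.mem_sdiff.1 hσ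
            rcases Finset.mem_insert.1 hω with rfl | hω
            · -- ω = γ, σ <+: γ <+: σ0
              have hneσ0 : σ ≠ σ0 := by
                intro h; rw [h] at hσC; exact hσC hσ0C
              exact hΓ2 σ hσΓ σ0 hσ0Γ hneσ0 (hpre.trans hγpre)
            · exact hΓ2 σ hσΓ ω (Finset.mem_sdiff.1 hω).1 hneq hpre
        · intro τ hτ
          obtain ⟨k, hk0, hkΓ⟩ := hΓ3 τ hτ
          by_cases hkC : (List.range k).map τ ∈ C
          · obtain ⟨j, hj, heq⟩ := (hmemC _).1 hkC
            have hkeq : k = L := by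
              apply_fun List.length at heq
              simp only [List.length_map, List.length_range, List.length_append,
                List.length_singleton, hγlen] at heq
              omega
            refine ⟨L - 1, by omega, ?_⟩
            have h1 : (List.range (L - 1)).map τ = ((List.range k).map τ).take (L - 1) := by
              rw [← List.map_take, List.take_range, hkeq]
              congr 2
              omega
            rw [h1, heq, List.take_append_of_le_length (by omega),
              show L - 1 = γ.length by omega, List.take_length]
            exact Finset.mem_insert_self _ _
          · exact ⟨k, hk0, Finset.mem_insert.2 (Or.inr (Finset.mem_sdiff.2 ⟨hkΓ, hkC⟩))⟩
      have hsumC : ∑ w ∈ C, f w = f γ := by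
        rw [hC, Finset.sum_image (by intro a _ b _ h; simpa using h)]
        rw [← child γ hγne hγadm]
        apply Finset.sum_subset (Finset.filter_subset _ _)
        intro j _ hj
        simp only [Finset.mem_filter, Finset.mem_univ, true_and] at hj
        have hPz : P i j = 0 := le_antisymm (not_lt.1 hj) (hP0 i j)
        rw [hf]
        simp only
        rw [wprod_concat P j d γ hγne, ← hi, hPz, mul_zero, zero_mul,
          Real.zero_rpow hζ0.ne', zero_mul]
      have hsum' : ∑ w ∈ Γ', f w = ∑ w ∈ Γ, f w := by
        rw [hΓ', Finset.sum_insert (by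
          intro h
          exact hγnotΓ (Finset.mem_sdiff.1 h).1)]
        rw [← Finset.sum_sdiff hCsub, hsumC]
        ring
      rw [← hsum']
      exact ih Γ' hΓ'card hΓ'mas

end QMAux

open QM in
theorem antichain_eigenvector_sum
    {N : ℕ} (hN : 2 ≤ N)
    (P c : Matrix (Fin N) (Fin N) ℝ) (r : ℝ) (hr : 0 < r)
    (hP0 : ∀ i j, 0 ≤ P i j)
    (hProw : ∀ i, ∑ j, P i j = 1)
    (hPcard : ∀ i : Fin N, 2 ≤ {j : Fin N | 0 < P i j}.ncard)
    (hc1 : ∀ i j, 0 < P i j → 0 < c i j ∧ c i j < 1)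
    (hc0 : ∀ i j, P i j = 0 → c i j = 0)
    (ζ : ℝ) (hζ0 : 0 < ζ) (hζ1 : ζ < 1)
    (ξ : Fin N → ℝ) (hξpos : ∀ i, 0 < ξ i) (hξsum : ∑ i, ξ i = 1)
    (hξeig : ∀ i, ∑ j, (P i j * c i j ^ r) ^ ζ * ξ j = ξ i)
    :
    ∀ Γ : Finset (List (Fin N)), QM.IsMaxAntichain P Γ →
      ∑ σ ∈ Γ, (QM.wprod P σ * QM.wprod c σ ^ r) ^ ζ * ξ (σ.getLastD ⟨0, by omega⟩) = 1 := by
  exact QMAux.main hN P c r hr hP0 hProw hPcard hc1 hc0 ζ hζ0 ξ hξpos hξsum hξeig ⟨0, by omega⟩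
end

section
/- s_r = max_{H ∈ SC(G)} s_r(H); that is, the unique positive solution of Ψ_G(s_r) = 1 equals the maximum over all strongly connected components H of G (containing at least one edge) of the unique positive solutions s_r(H) of Ψ_H(s_r(H)) = 1. -/
open Filter MeasureTheory
open scoped ENNReal

namespace SRAux

variable {ι : Type} [Fintype ι] [DecidableEq ι]

lemma toLin'_eq_algEquiv (M : Matrix ι ι ℂ) : Matrix.toLin' M = Matrix.toLinAlgEquiv' M := by
  ext v
  simp [Matrix.toLin'_apply, Matrix.toLinAlgEquiv'_apply]

lemma hasEigenvalue_iff (M : Matrix ι ι ℂ) (z : ℂ) :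
    Module.End.HasEigenvalue (Matrix.toLin' M) z ↔ z ∈ spectrum ℂ M := by
  rw [toLin'_eq_algEquiv, Module.End.hasEigenvalue_iff_mem_spectrum,
    AlgEquiv.spectrum_eq Matrix.toLinAlgEquiv']

lemma specRad_eq_sSup (A : Matrix ι ι ℝ) :
    QM.specRad A = sSup ((fun z : ℂ => ‖z‖) '' spectrum ℂ (A.map (fun t => (t : ℂ)))) := by
  unfold QM.specRad
  congr 1
  ext x
  simp only [Set.mem_setOf_eq, Set.mem_image]
  constructor
  · rintro ⟨z, hz, rfl⟩; exact ⟨z, (hasEigenvalue_iff _ _).1 hz, rfl⟩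
  · rintro ⟨z, hz, rfl⟩; exact ⟨z, (hasEigenvalue_iff _ _).2 hz, rfl⟩

lemma spectrum_nonempty [Nonempty ι] (M : Matrix ι ι ℂ) : (spectrum ℂ M).Nonempty := by
  obtain ⟨z, hz⟩ := Module.End.exists_eigenvalue (Matrix.toLinAlgEquiv' M : Module.End ℂ (ι → ℂ))
  exact ⟨z, by
    have := (Module.End.hasEigenvalue_iff_mem_spectrum).1 hz
    rwa [AlgEquiv.spectrum_eq Matrix.toLinAlgEquiv'] at this⟩

lemma exists_abs_eq_specRad [Nonempty ι] (A : Matrix ι ι ℝ) :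
    ∃ z ∈ spectrum ℂ (A.map (fun t => (t : ℂ))), ‖z‖ = QM.specRad A := by
  have hfin : ((fun z : ℂ => ‖z‖) '' spectrum ℂ (A.map (fun t => (t : ℂ)))).Finite :=
    ((Matrix.finite_spectrum _).image _)
  have hne : ((fun z : ℂ => ‖z‖) '' spectrum ℂ (A.map (fun t => (t : ℂ)))).Nonempty :=
    (spectrum_nonempty _).image _
  have := hne.csSup_mem hfin
  rw [← specRad_eq_sSup] at this
  obtain ⟨z, hz, hz'⟩ := this
  exact ⟨z, hz, hz'⟩

lemma abs_le_specRad (A : Matrix ι ι ℝ) {z : ℂ}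
    (hz : z ∈ spectrum ℂ (A.map (fun t => (t : ℂ)))) : ‖z‖ ≤ QM.specRad A := by
  rw [specRad_eq_sSup]
  exact le_csSup (((Matrix.finite_spectrum _).image _).bddAbove) ⟨z, hz, rfl⟩

lemma specRad_nonneg [Nonempty ι] (A : Matrix ι ι ℝ) : 0 ≤ QM.specRad A := by
  obtain ⟨z, _, hz⟩ := exists_abs_eq_specRad A
  rw [← hz]; exact norm_nonneg z

lemma spectralRadius_eq [Nonempty ι] (A : Matrix ι ι ℝ) :
    spectralRadius ℂ (A.map (fun t => (t : ℂ))) = ENNReal.ofReal (QM.specRad A) := by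
  apply le_antisymm
  · rw [spectralRadius]
    refine iSup₂_le fun z hz => ?_
    have h1 : ‖z‖ ≤ QM.specRad A := abs_le_specRad A hz
    have h2 : (‖z‖₊ : ℝ≥0∞) = ENNReal.ofReal ‖z‖ := by
      rw [ofReal_norm, enorm_eq_nnnorm]
    rw [h2]
    exact ENNReal.ofReal_le_ofReal h1
  · obtain ⟨z, hz, hz'⟩ := exists_abs_eq_specRad A
    rw [← hz']
    have : ENNReal.ofReal ‖z‖ = (‖z‖₊ : ℝ≥0∞) := by
      rw [ofReal_norm, enorm_eq_nnnorm]
    rw [this, spectralRadius]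
    exact le_iSup₂ (f := fun k (_ : k ∈ spectrum ℂ _) => (‖k‖₊ : ℝ≥0∞)) z hz

end SRAux

namespace SRAux

variable {ι : Type} [Fintype ι] [DecidableEq ι]

/-- complexification of a real matrix -/
noncomputable def cmap (A : Matrix ι ι ℝ) : Matrix ι ι ℂ := A.map (fun t => (t : ℂ))

lemma cmap_pow (A : Matrix ι ι ℝ) (n : ℕ) : (cmap A) ^ n = cmap (A ^ n) := by
  have h : ∀ M : Matrix ι ι ℝ, cmap M = Complex.ofRealHom.mapMatrix M := fun _ => rfl
  rw [h, h, ← map_pow]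

attribute [local instance] Matrix.linftyOpNormedRing Matrix.linftyOpNormedAlgebra

lemma nnnorm_cmap_mono {A B : Matrix ι ι ℝ} (hA : ∀ i j, 0 ≤ A i j)
    (hAB : ∀ i j, A i j ≤ B i j) : ‖cmap A‖ ≤ ‖cmap B‖ := by
  rw [Matrix.linfty_opNorm_def, Matrix.linfty_opNorm_def]
  rw [NNReal.coe_le_coe]
  apply Finset.sup_mono_fun
  intro i _
  apply Finset.sum_le_sum
  intro j _
  have h0 : 0 ≤ A i j := hA i j
  have h1 : A i j ≤ B i j := hAB i j
  show ‖(A i j : ℂ)‖₊ ≤ ‖(B i j : ℂ)‖₊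
  rw [← NNReal.coe_le_coe]
  show ‖(A i j : ℂ)‖ ≤ ‖(B i j : ℂ)‖
  rw [Complex.norm_real, Complex.norm_real, Real.norm_of_nonneg h0,
    Real.norm_of_nonneg (h0.trans h1)]
  exact h1

end SRAux

namespace SRAux

attribute [local instance] Matrix.linftyOpNormedRing Matrix.linftyOpNormedAlgebra

lemma spectralRadius_cmap_eq {ι : Type} [Fintype ι] [DecidableEq ι] [Nonempty ι]
    (A : Matrix ι ι ℝ) : spectralRadius ℂ (cmap A) = ENNReal.ofReal (QM.specRad A) :=
  spectralRadius_eq A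

variable {ι : Type} [Fintype ι] [DecidableEq ι]

lemma specRad_le_mul_of_norm {κ : Type} [Fintype κ] [DecidableEq κ] [Nonempty κ] [Nonempty ι]
    (A : Matrix κ κ ℝ) (B : Matrix ι ι ℝ) {t : ℝ} (ht : 0 ≤ t)
    (h : ∀ n : ℕ, 1 ≤ n → ‖(cmap A) ^ n‖ ≤ t ^ n * ‖(cmap B) ^ n‖) :
    QM.specRad A ≤ t * QM.specRad B := by
  letI : CompleteSpace (Matrix κ κ ℂ) := FiniteDimensional.complete ℂ _
  letI : CompleteSpace (Matrix ι ι ℂ) := FiniteDimensional.complete ℂ _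
  have hA := spectrum.pow_nnnorm_pow_one_div_tendsto_nhds_spectralRadius (cmap A)
  have hB := spectrum.pow_nnnorm_pow_one_div_tendsto_nhds_spectralRadius (cmap B)
  have hB' : Filter.Tendsto
      (fun n : ℕ => (ENNReal.ofReal t) * (‖(cmap B) ^ n‖₊ : ℝ≥0∞) ^ (1/(n:ℝ))) Filter.atTop
      (nhds (ENNReal.ofReal t * spectralRadius ℂ (cmap B))) :=
    ENNReal.Tendsto.const_mul hB (Or.inr ENNReal.ofReal_ne_top)
  have key : spectralRadius ℂ (cmap A) ≤ ENNReal.ofReal t * spectralRadius ℂ (cmap B) := by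
    refine le_of_tendsto_of_tendsto hA hB' ?_
    filter_upwards [Filter.eventually_ge_atTop 1] with n hn
    have hn0 : (n:ℝ) ≠ 0 := Nat.cast_ne_zero.mpr (by omega)
    have h1 : (‖(cmap A) ^ n‖₊ : ℝ≥0∞) ≤ (ENNReal.ofReal (t ^ n)) * ‖(cmap B) ^ n‖₊ := by
      calc (‖(cmap A) ^ n‖₊ : ℝ≥0∞) = ENNReal.ofReal ‖(cmap A) ^ n‖ :=
            (ofReal_norm _).symm
        _ ≤ ENNReal.ofReal (t ^ n * ‖(cmap B) ^ n‖) := ENNReal.ofReal_le_ofReal (h n hn)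
        _ = ENNReal.ofReal (t ^ n) * ENNReal.ofReal ‖(cmap B) ^ n‖ :=
            ENNReal.ofReal_mul (pow_nonneg ht n)
        _ = _ := by rw [ofReal_norm, enorm_eq_nnnorm]
    have h2 := ENNReal.rpow_le_rpow h1 (by positivity : (0:ℝ) ≤ 1/(n:ℝ))
    rw [ENNReal.mul_rpow_of_nonneg _ _ (by positivity : (0:ℝ) ≤ 1/(n:ℝ))] at h2
    refine h2.trans_eq ?_
    congr 1
    rw [ENNReal.ofReal_pow ht, ← ENNReal.rpow_natCast (ENNReal.ofReal t) n, ← ENNReal.rpow_mul]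
    rw [mul_one_div, div_self hn0, ENNReal.rpow_one]
  rw [spectralRadius_cmap_eq, spectralRadius_cmap_eq, ← ENNReal.ofReal_mul ht] at key
  exact (ENNReal.ofReal_le_ofReal_iff (mul_nonneg ht (specRad_nonneg B))).1 key

end SRAux

namespace SRAux

attribute [local instance] Matrix.linftyOpNormedRing Matrix.linftyOpNormedAlgebra
  Matrix.linftyOpNormedSpace

variable {ι : Type} [Fintype ι] [DecidableEq ι]

lemma pow_entry_nonneg {A : Matrix ι ι ℝ} (hA : ∀ i j, 0 ≤ A i j) (n : ℕ) :
    ∀ i j, 0 ≤ (A ^ n) i j := by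
  induction n with
  | zero => intro i j; rw [pow_zero]; by_cases h : i = j <;> simp [Matrix.one_apply, h]
  | succ n ih =>
    intro i j
    rw [pow_succ, Matrix.mul_apply]
    exact Finset.sum_nonneg fun k _ => mul_nonneg (ih i k) (hA k j)

lemma pow_entry_le {A B : Matrix ι ι ℝ} (hA : ∀ i j, 0 ≤ A i j)
    (hAB : ∀ i j, A i j ≤ B i j) (n : ℕ) : ∀ i j, (A ^ n) i j ≤ (B ^ n) i j := by
  have hB : ∀ i j, 0 ≤ B i j := fun i j => (hA i j).trans (hAB i j)
  induction n with
  | zero => intro i j; rw [pow_zero, pow_zero]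
  | succ n ih =>
    intro i j
    rw [pow_succ, pow_succ, Matrix.mul_apply, Matrix.mul_apply]
    refine Finset.sum_le_sum fun k _ => ?_
    exact mul_le_mul (ih i k) (hAB k j) (hA k j) (pow_entry_nonneg hB n i k)

lemma cmap_smul (t : ℝ) (A : Matrix ι ι ℝ) : cmap (t • A) = (t : ℂ) • cmap A := by
  ext i j
  simp [cmap, Matrix.smul_apply]

lemma specRad_le_mul_specRad [Nonempty ι] {A B : Matrix ι ι ℝ} {t : ℝ} (ht : 0 ≤ t)
    (hA : ∀ i j, 0 ≤ A i j) (hB : ∀ i j, 0 ≤ B i j) (hAB : ∀ i j, A i j ≤ t * B i j) :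
    QM.specRad A ≤ t * QM.specRad B := by
  refine specRad_le_mul_of_norm A B ht fun n _ => ?_
  have hC : ∀ i j, 0 ≤ (t • B) i j := fun i j => mul_nonneg ht (hB i j)
  have h1 : ∀ i j, (A ^ n) i j ≤ ((t • B) ^ n) i j :=
    pow_entry_le hA (fun i j => hAB i j) n
  have h2 : ‖cmap (A ^ n)‖ ≤ ‖cmap ((t • B) ^ n)‖ :=
    nnnorm_cmap_mono (pow_entry_nonneg hA n) h1
  rw [cmap_pow, cmap_pow]
  refine h2.trans ?_
  rw [smul_pow, cmap_smul]
  rw [norm_smul]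
  apply mul_le_mul_of_nonneg_right _ (norm_nonneg _)
  rw [Complex.norm_real, Real.norm_of_nonneg (pow_nonneg ht n)]

lemma row_sum_le_nnnorm (M : Matrix ι ι ℂ) (i : ι) : ∑ j, ‖M i j‖₊ ≤ ‖M‖₊ := by
  rw [Matrix.linfty_opNNNorm_def]
  exact Finset.le_sup (f := fun i => ∑ j, ‖M i j‖₊) (Finset.mem_univ i)

lemma nnnorm_coe_mono {x y : ℝ} (hx : 0 ≤ x) (hxy : x ≤ y) : ‖(x:ℂ)‖₊ ≤ ‖(y:ℂ)‖₊ := by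
  rw [← NNReal.coe_le_coe]
  show ‖(x:ℂ)‖ ≤ ‖(y:ℂ)‖
  rw [Complex.norm_real, Complex.norm_real, Real.norm_of_nonneg hx,
    Real.norm_of_nonneg (hx.trans hxy)]
  exact hxy

lemma specRad_submatrix_le {κ : Type} [Fintype κ] [DecidableEq κ] [Nonempty κ] [Nonempty ι]
    {A : Matrix ι ι ℝ} (hA : ∀ i j, 0 ≤ A i j) (f : κ → ι) (hf : Function.Injective f) :
    QM.specRad (A.submatrix f f) ≤ QM.specRad A := by
  have h := specRad_le_mul_of_norm (t := 1) (A.submatrix f f) A zero_le_one ?_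
  · rwa [one_mul] at h
  intro n hn1
  clear hn1
  rw [one_pow, one_mul, cmap_pow, cmap_pow]
  have hsub : ∀ i j, 0 ≤ A.submatrix f f i j := fun i j => hA _ _
  have key : ∀ i j, ((A.submatrix f f) ^ n) i j ≤ (A ^ n) (f i) (f j) := by
    induction n with
    | zero =>
      intro i j
      rw [pow_zero, pow_zero, Matrix.one_apply, Matrix.one_apply]
      by_cases h : i = j
      · simp [h]
      · simp [h, hf.ne h]
    | succ n ih =>
      intro i j
      rw [pow_succ, pow_succ, Matrix.mul_apply, Matrix.mul_apply]
      have : ∀ k : κ, ((A.submatrix f f) ^ n) i k * (A.submatrix f f) k j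
          ≤ (A ^ n) (f i) (f k) * A (f k) (f j) := fun k =>
        mul_le_mul (ih i k) (le_refl _) (hA _ _) (pow_entry_nonneg hA n _ _)
      calc ∑ k : κ, ((A.submatrix f f) ^ n) i k * (A.submatrix f f) k j
          ≤ ∑ k : κ, (A ^ n) (f i) (f k) * A (f k) (f j) := Finset.sum_le_sum fun k _ => this k
        _ = ∑ k ∈ Finset.univ.image f, (A ^ n) (f i) k * A k (f j) :=
            by rw [Finset.sum_image (fun a _ b _ h => hf h)]
        _ ≤ ∑ k : ι, (A ^ n) (f i) k * A k (f j) :=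
            Finset.sum_le_sum_of_subset_of_nonneg (Finset.subset_univ _)
              (fun k _ _ => mul_nonneg (pow_entry_nonneg hA n _ _) (hA _ _))
  rw [← coe_nnnorm, ← coe_nnnorm, NNReal.coe_le_coe]
  rw [Matrix.linfty_opNNNorm_def]
  apply Finset.sup_le
  intro i _
  calc ∑ j : κ, ‖cmap ((A.submatrix f f) ^ n) i j‖₊
      ≤ ∑ j : κ, ‖((A ^ n) (f i) (f j) : ℂ)‖₊ :=
        Finset.sum_le_sum fun j _ =>
          nnnorm_coe_mono (pow_entry_nonneg hsub n i j) (key i j)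
    _ = ∑ j ∈ Finset.univ.image f, ‖((A ^ n) (f i) j : ℂ)‖₊ :=
        by rw [Finset.sum_image (fun a _ b _ h => hf h)]
    _ ≤ ∑ j : ι, ‖((A ^ n) (f i) j : ℂ)‖₊ :=
        Finset.sum_le_sum_of_subset (Finset.subset_univ _)
    _ ≤ ‖cmap (A ^ n)‖₊ := row_sum_le_nnnorm (cmap (A ^ n)) (f i)

end SRAux

namespace SRAux

attribute [local instance] Matrix.linftyOpNormedRing Matrix.linftyOpNormedAlgebra
  Matrix.linftyOpNormedSpace

variable {ι : Type} [Fintype ι] [DecidableEq ι]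

lemma entry_le_norm {A : Matrix ι ι ℝ} (hA : ∀ i j, 0 ≤ A i j) (i j : ι) :
    A i j ≤ ‖cmap A‖ := by
  have h1 : ‖cmap A i j‖₊ ≤ ‖cmap A‖₊ :=
    le_trans (Finset.single_le_sum (f := fun j => ‖cmap A i j‖₊) (fun _ _ => zero_le)
      (Finset.mem_univ j)) (row_sum_le_nnnorm (cmap A) i)
  have h2 : ‖cmap A i j‖ ≤ ‖cmap A‖ := h1
  rwa [show cmap A i j = ((A i j : ℝ) : ℂ) from rfl, Complex.norm_real,
    Real.norm_of_nonneg (hA i j)] at h2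

lemma diag_pow_ge {A : Matrix ι ι ℝ} (hA : ∀ i j, 0 ≤ A i j) (i : ι) (t : ℕ) :
    (A i i) ^ t ≤ (A ^ t) i i := by
  induction t with
  | zero => simp
  | succ t ih =>
    rw [pow_succ, pow_succ, Matrix.mul_apply]
    calc A i i ^ t * A i i ≤ (A ^ t) i i * A i i :=
        mul_le_mul_of_nonneg_right ih (hA i i)
      _ ≤ ∑ k, (A ^ t) i k * A k i :=
        Finset.single_le_sum (f := fun k => (A ^ t) i k * A k i)
          (fun k _ => mul_nonneg (pow_entry_nonneg hA t i k) (hA k i)) (Finset.mem_univ i)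

lemma specRad_pos [Nonempty ι] {A : Matrix ι ι ℝ} (hA : ∀ i j, 0 ≤ A i j) {i : ι} {k : ℕ}
    (hk : 1 ≤ k) (hpos : 0 < (A ^ k) i i) : 0 < QM.specRad A := by
  letI : CompleteSpace (Matrix ι ι ℂ) := FiniteDimensional.complete ℂ _
  set ε : ℝ := (A ^ k) i i with hε
  have hgel := spectrum.pow_nnnorm_pow_one_div_tendsto_nhds_spectralRadius (cmap A)
  have hmono : Filter.Tendsto (fun t : ℕ => k * t) Filter.atTop Filter.atTop := by
    apply Filter.tendsto_atTop_mono (fun t => Nat.le_mul_of_pos_left t (by omega))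
    exact Filter.tendsto_id
  have hsub := hgel.comp hmono
  have hlb : (ENNReal.ofReal ε) ^ ((1:ℝ)/(k:ℝ)) ≤ spectralRadius ℂ (cmap A) := by
    refine ge_of_tendsto hsub ?_
    filter_upwards [Filter.eventually_ge_atTop 1] with t ht
    have hkt : (1:ℕ) ≤ k * t := Nat.one_le_iff_ne_zero.2 (by positivity)
    have h1 : ε ^ t ≤ (A ^ (k * t)) i i := by
      calc ε ^ t = ((A ^ k) i i) ^ t := rfl
        _ ≤ ((A ^ k) ^ t) i i := diag_pow_ge (pow_entry_nonneg hA k) i t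
        _ = (A ^ (k * t)) i i := by rw [← pow_mul]
    have h2 : ε ^ t ≤ ‖cmap (A ^ (k * t))‖ :=
      h1.trans (entry_le_norm (pow_entry_nonneg hA _) i i)
    have h3 : ENNReal.ofReal (ε ^ t) ≤ (‖(cmap A) ^ (k * t)‖₊ : ℝ≥0∞) := by
      rw [cmap_pow, ← enorm_eq_nnnorm, ← ofReal_norm]
      exact ENNReal.ofReal_le_ofReal h2
    have h4 := ENNReal.rpow_le_rpow h3 (by positivity : (0:ℝ) ≤ 1/((k*t : ℕ):ℝ))
    refine le_trans (le_of_eq ?_) h4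
    rw [ENNReal.ofReal_pow hpos.le, ← ENNReal.rpow_natCast (ENNReal.ofReal ε) t,
      ← ENNReal.rpow_mul]
    congr 1
    have hk0 : (k:ℝ) ≠ 0 := Nat.cast_ne_zero.2 (by omega)
    have ht0 : (t:ℝ) ≠ 0 := Nat.cast_ne_zero.2 (by omega)
    push_cast
    field_simp
  have hpos' : (0:ℝ≥0∞) < (ENNReal.ofReal ε) ^ ((1:ℝ)/(k:ℝ)) := by
    apply ENNReal.rpow_pos (ENNReal.ofReal_pos.2 hpos)
    exact ENNReal.ofReal_ne_top
  have : (0:ℝ≥0∞) < spectralRadius ℂ (cmap A) := lt_of_lt_of_le hpos' hlb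
  rw [spectralRadius_cmap_eq] at this
  exact ENNReal.ofReal_pos.1 this

end SRAux

namespace SRAux

variable {ι : Type} [Fintype ι] [DecidableEq ι]

lemma specRad_zero_matrix [Nonempty ι] {A : Matrix ι ι ℝ} (hA : ∀ i j, A i j = 0) :
    QM.specRad A = 0 := by
  have h0 : ∀ i j, 0 ≤ A i j := fun i j => le_of_eq (hA i j).symm
  have h := specRad_le_mul_specRad (t := 0) le_rfl h0 h0
    (fun i j => by rw [hA i j, zero_mul])
  have := specRad_nonneg A
  nlinarith [specRad_nonneg A]

lemma spectrum_block_of_blockTriangular {α : Type*} [LinearOrder α] [DecidableEq α]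
    (M : Matrix ι ι ℂ) (b : ι → α) (hM : M.BlockTriangular b) {z : ℂ}
    (hz : z ∈ spectrum ℂ M) :
    ∃ k ∈ Finset.univ.image b, z ∈ spectrum ℂ (M.toSquareBlock b k) := by
  rw [spectrum.mem_iff] at hz
  set D : Matrix ι ι ℂ := algebraMap ℂ (Matrix ι ι ℂ) z - M with hD
  have hDbt : D.BlockTriangular b := by
    intro i j hij
    have hne : i ≠ j := fun h => by subst h; exact lt_irrefl _ hij
    rw [hD, Matrix.sub_apply, hM hij, Algebra.algebraMap_eq_smul_one, Matrix.smul_apply,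
      Matrix.one_apply_ne hne, smul_zero, sub_zero]
  have hdet0 : D.det = 0 := by
    by_contra h
    exact hz ((Matrix.isUnit_iff_isUnit_det D).2 (isUnit_iff_ne_zero.2 h))
  rw [hDbt.det] at hdet0
  obtain ⟨k, hk, hk0⟩ := Finset.prod_eq_zero_iff.1 hdet0
  refine ⟨k, hk, ?_⟩
  rw [spectrum.mem_iff]
  have hblk : algebraMap ℂ _ z - M.toSquareBlock b k = D.toSquareBlock b k := by
    ext i j
    rw [Matrix.sub_apply, Matrix.toSquareBlock_def, Matrix.toSquareBlock_def]
    simp only [Matrix.of_apply, hD, Matrix.sub_apply]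
    congr 1
    rw [Algebra.algebraMap_eq_smul_one, Algebra.algebraMap_eq_smul_one, Matrix.smul_apply,
      Matrix.smul_apply, Matrix.one_apply, Matrix.one_apply]
    have : (i = j) ↔ ((i : ι) = (j : ι)) := ⟨fun h => by rw [h], fun h => Subtype.ext h⟩
    by_cases h : i = j
    · rw [if_pos h, if_pos (this.1 h)]
    · rw [if_neg h, if_neg (fun hh => h (this.2 hh))]
  rw [hblk]
  intro hu
  rw [Matrix.isUnit_iff_isUnit_det, isUnit_iff_ne_zero] at hu
  exact hu hk0

lemma specRad_reindex {κ : Type} [Fintype κ] [DecidableEq κ] (A : Matrix ι ι ℝ) (e : κ ≃ ι) :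
    QM.specRad (A.submatrix e e) = QM.specRad A := by
  rw [specRad_eq_sSup, specRad_eq_sSup]
  have h1 : (A.submatrix e e).map (fun t => (t:ℂ)) = (A.map (fun t => (t:ℂ))).submatrix e e := rfl
  have h2 : (A.map (fun t => (t:ℂ))).submatrix ⇑e ⇑e
      = Matrix.reindexAlgEquiv ℂ ℂ e.symm (A.map (fun t => (t:ℂ))) := by
    rw [Matrix.reindexAlgEquiv_apply, Matrix.reindex_apply, Equiv.symm_symm]
  rw [h1, h2, AlgEquiv.spectrum_eq]

end SRAux


namespace SRAux

open Finset

variable {N : ℕ} (P : Matrix (Fin N) (Fin N) ℝ)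

/-- reachability -/
def Rch (i j : Fin N) : Prop := Relation.ReflTransGen (QM.Edge P) i j

open Classical in
noncomputable def classF (i : Fin N) : Finset (Fin N) :=
  Finset.univ.filter (fun j => Rch P i j ∧ Rch P j i)

open Classical in
noncomputable def downF (i : Fin N) : Finset (Fin N) :=
  Finset.univ.filter (fun k => Rch P k i)

variable {P}

lemma mem_classF {i j : Fin N} : j ∈ classF P i ↔ Rch P i j ∧ Rch P j i := by
  classical
  simp [classF]

lemma self_mem_classF (i : Fin N) : i ∈ classF P i :=
  mem_classF.2 ⟨Relation.ReflTransGen.refl, Relation.ReflTransGen.refl⟩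

lemma classF_eq_of_mut {i j : Fin N} (h1 : Rch P i j) (h2 : Rch P j i) :
    classF P i = classF P j := by
  ext u
  rw [mem_classF, mem_classF]
  exact ⟨fun ⟨a, b⟩ => ⟨h2.trans a, b.trans h1⟩, fun ⟨a, b⟩ => ⟨h1.trans a, b.trans h2⟩⟩

lemma mem_downF {i k : Fin N} : k ∈ downF P i ↔ Rch P k i := by
  classical
  simp [downF]

lemma downF_subset {i j : Fin N} (h : Rch P i j) : downF P i ⊆ downF P j := fun k hk =>
  mem_downF.2 ((mem_downF.1 hk).trans h)

variable (P)

noncomputable def repN (i : Fin N) : ℕ :=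
  (classF P i).sup (fun x => (x : ℕ))

noncomputable def bF (i : Fin N) : ℕ ×ₗ ℕ :=
  toLex ((downF P i).card, repN P i)

variable {P}

lemma exists_repN (i : Fin N) : ∃ x ∈ classF P i, repN P i = (x : ℕ) :=
  Finset.exists_mem_eq_sup _ ⟨i, self_mem_classF i⟩ _

lemma bF_le_of_rch {i j : Fin N} (h : Rch P i j) : bF P i ≤ bF P j := by
  have hsub := downF_subset h
  rcases lt_or_eq_of_le (Finset.card_le_card hsub) with hlt | heq
  · exact Prod.Lex.le_iff.2 (Or.inl hlt)
  · have hset : downF P i = downF P j := Finset.eq_of_subset_of_card_le hsub (le_of_eq heq.symm)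
    have hji : Rch P j i := mem_downF.1 (hset ▸ mem_downF.2 (Relation.ReflTransGen.refl))
    have hcl : classF P i = classF P j := classF_eq_of_mut h hji
    apply le_of_eq
    unfold bF repN
    rw [heq, hcl]

lemma mut_of_bF_eq {i j : Fin N} (h : bF P i = bF P j) : Rch P i j ∧ Rch P j i := by
  have hrep : repN P i = repN P j := by
    have := congrArg (fun x => (ofLex x).2) h
    simpa [bF] using this
  obtain ⟨x, hx, hx'⟩ := exists_repN (P := P) i
  obtain ⟨y, hy, hy'⟩ := exists_repN (P := P) j
  have hxy : x = y := Fin.val_inj.1 (by rw [← hx', ← hy', hrep])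
  subst hxy
  have h1 := mem_classF.1 hx
  have h2 := mem_classF.1 hy
  exact ⟨h1.1.trans h2.2, h2.1.trans h1.2⟩

lemma classF_eq_of_bF_eq {i j : Fin N} (h : bF P i = bF P j) : classF P i = classF P j :=
  classF_eq_of_mut (mut_of_bF_eq h).1 (mut_of_bF_eq h).2

lemma reachIn_of_mut {u v : Fin N} (huv : Rch P u v) (hvu : Rch P v u) :
    QM.ReachIn P {x | Rch P u x ∧ Rch P x u} u v := by
  induction huv with
  | refl => exact Relation.ReflTransGen.refl
  | @tail w v h e ih =>
    have hvu' : Rch P v u := hvu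
    have hwu : Rch P w u := (Relation.ReflTransGen.single e).trans hvu'
    refine Relation.ReflTransGen.tail (ih hwu) ⟨e, ⟨h, hwu⟩, ⟨h.tail e, hvu'⟩⟩

lemma reachIn_mono {S T : Set (Fin N)} (hST : S ⊆ T) {u v : Fin N}
    (h : QM.ReachIn P S u v) : QM.ReachIn P T u v :=
  Relation.ReflTransGen.mono (p := fun a b => QM.Edge P a b ∧ a ∈ T ∧ b ∈ T)
    (fun a b (hab : QM.Edge P a b ∧ a ∈ S ∧ b ∈ S) => ⟨hab.1, hST hab.2.1, hST hab.2.2⟩) _ _ h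

lemma rch_of_reachIn {S : Set (Fin N)} {u v : Fin N} (h : QM.ReachIn P S u v) : Rch P u v :=
  Relation.ReflTransGen.mono (p := QM.Edge P)
    (fun a b (hab : QM.Edge P a b ∧ a ∈ S ∧ b ∈ S) => hab.1) _ _ h

lemma strConn_classF (i : Fin N) : QM.StrConn P ↑(classF P i) := by
  intro u hu v hv
  rw [Finset.mem_coe, mem_classF] at hu hv
  have huv : Rch P u v := hu.2.trans hv.1
  have hvu : Rch P v u := hv.2.trans hu.1
  refine reachIn_mono ?_ (reachIn_of_mut huv hvu)
  intro x hx
  rw [Finset.mem_coe, mem_classF]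
  exact ⟨hu.1.trans hx.1, hx.2.trans hu.2⟩

lemma classF_maximal (i : Fin N) (S : Finset (Fin N)) (hsub : classF P i ⊆ S)
    (hS : QM.StrConn P ↑S) : S = classF P i := by
  apply Finset.Subset.antisymm
  · intro u hu
    have hi : i ∈ S := hsub (self_mem_classF i)
    have h1 : Rch P i u := rch_of_reachIn (hS i hi u hu)
    have h2 : Rch P u i := rch_of_reachIn (hS u hu i hi)
    exact mem_classF.2 ⟨h1, h2⟩
  · exact hsub

lemma isSCC_classF (i : Fin N)
    (hedge : ∃ u ∈ classF P i, ∃ v ∈ classF P i, QM.Edge P u v) :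
    QM.IsSCC P (classF P i) :=
  ⟨strConn_classF i, classF_maximal i, hedge⟩

lemma scc_eq_classF {H : Finset (Fin N)} (hH : QM.IsSCC P H) {i : Fin N} (hi : i ∈ H) :
    H = classF P i := by
  have hsub : H ⊆ classF P i := by
    intro u hu
    exact mem_classF.2 ⟨rch_of_reachIn (hH.1 i hi u hu), rch_of_reachIn (hH.1 u hu i hi)⟩
  exact (hH.2.1 (classF P i) hsub (strConn_classF i)).symm

end SRAux


namespace SRAux

variable {N : ℕ} {P c : Matrix (Fin N) (Fin N) ℝ} {r : ℝ}

lemma bF_eq_of_mut {i j : Fin N} (h1 : Rch P i j) (h2 : Rch P j i) : bF P i = bF P j := by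
  have hd : downF P i = downF P j :=
    Finset.Subset.antisymm (downF_subset h1) (downF_subset h2)
  have hc : classF P i = classF P j := classF_eq_of_mut h1 h2
  unfold bF repN
  rw [hd, hc]

lemma AGs_nonneg (hc1 : ∀ i j, 0 < P i j → 0 < c i j ∧ c i j < 1) (s : ℝ) :
    ∀ i j, 0 ≤ QM.AGs P c r s i j := by
  intro i j
  unfold QM.AGs
  simp only [Matrix.of_apply]
  split
  · rename_i h
    have h1 := (hc1 i j h).1
    positivity
  · exact le_rfl

lemma edge_of_AGs_ne_zero {s : ℝ} {i j : Fin N} (h : QM.AGs P c r s i j ≠ 0) :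
    QM.Edge P i j := by
  by_contra hij
  apply h
  unfold QM.AGs
  simp only [Matrix.of_apply]
  exact if_neg hij

lemma val_pos (hc1 : ∀ i j, 0 < P i j → 0 < c i j ∧ c i j < 1) {i j : Fin N}
    (hij : 0 < P i j) : 0 < P i j * c i j ^ r :=
  mul_pos hij (Real.rpow_pos_of_pos (hc1 i j hij).1 r)

lemma val_lt_one (hr : 0 < r) (hP0 : ∀ i j, 0 ≤ P i j) (hProw : ∀ i, ∑ j, P i j = 1)
    (hc1 : ∀ i j, 0 < P i j → 0 < c i j ∧ c i j < 1) {i j : Fin N}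
    (hij : 0 < P i j) : P i j * c i j ^ r < 1 := by
  have hP1 : P i j ≤ 1 := by
    rw [← hProw i]
    exact Finset.single_le_sum (f := fun j => P i j) (fun k _ => hP0 i k) (Finset.mem_univ j)
  have hcr : c i j ^ r < 1 :=
    Real.rpow_lt_one (hc1 i j hij).1.le (hc1 i j hij).2 hr
  have hcr0 : 0 < c i j ^ r := Real.rpow_pos_of_pos (hc1 i j hij).1 r
  nlinarith

lemma theta_lt (hr : 0 < r) {s s' : ℝ} (hs : 0 < s) (hss' : s < s') :
    s / (s + r) < s' / (s' + r) := by
  rw [div_lt_div_iff₀ (by linarith) (by linarith)]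
  nlinarith

lemma psiH_le_kappa (hr : 0 < r) (hP0 : ∀ i j, 0 ≤ P i j) (hProw : ∀ i, ∑ j, P i j = 1)
    (hc1 : ∀ i j, 0 < P i j → 0 < c i j ∧ c i j < 1)
    {H : Finset (Fin N)} (hne : Nonempty {i // i ∈ H}) {s s' m : ℝ}
    (hs : 0 < s) (hss' : s < s') (hm0 : 0 ≤ m)
    (hm : ∀ i j, 0 < P i j → P i j * c i j ^ r ≤ m) :
    QM.PsiH P c r s' H ≤ m ^ (s'/(s'+r) - s/(s+r)) * QM.PsiH P c r s H := by
  set δ : ℝ := s'/(s'+r) - s/(s+r) with hδ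
  have hδpos : 0 < δ := sub_pos.2 (theta_lt hr hs hss')
  refine specRad_le_mul_specRad (Real.rpow_nonneg hm0 δ)
    (fun i j => AGs_nonneg hc1 s' i.1 j.1) (fun i j => AGs_nonneg hc1 s i.1 j.1) ?_
  · intro i j
    show QM.AGs P c r s' i.1 j.1 ≤ m ^ δ * QM.AGs P c r s i.1 j.1
    unfold QM.AGs
    simp only [Matrix.of_apply]
    by_cases hij : 0 < P i.1 j.1
    · rw [if_pos hij, if_pos hij]
      set v : ℝ := P i.1 j.1 * c i.1 j.1 ^ r with hv
      have hv0 : 0 < v := val_pos hc1 hij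
      have hvm : v ≤ m := hm i.1 j.1 hij
      have : v ^ (s'/(s'+r)) = v ^ (s/(s+r)) * v ^ δ := by
        rw [← Real.rpow_add hv0, hδ]; ring_nf
      rw [this]
      calc v ^ (s/(s+r)) * v ^ δ ≤ v ^ (s/(s+r)) * m ^ δ :=
            mul_le_mul_of_nonneg_left (Real.rpow_le_rpow hv0.le hvm hδpos.le)
              (Real.rpow_nonneg hv0.le _)
        _ = m ^ δ * v ^ (s/(s+r)) := mul_comm _ _
    · rw [if_neg hij, if_neg hij, mul_zero]

end SRAux

open SRAux in
open QM in
theorem sr_eq_max_over_scc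
    {N : ℕ} (hN : 2 ≤ N)
    (P c : Matrix (Fin N) (Fin N) ℝ) (r : ℝ) (hr : 0 < r)
    (hP0 : ∀ i j, 0 ≤ P i j)
    (hProw : ∀ i, ∑ j, P i j = 1)
    (hPcard : ∀ i : Fin N, 2 ≤ {j : Fin N | 0 < P i j}.ncard)
    (hc1 : ∀ i j, 0 < P i j → 0 < c i j ∧ c i j < 1)
    (hc0 : ∀ i j, P i j = 0 → c i j = 0)
    (sr : ℝ) (hsr : 0 < sr) (hsreq : QM.PsiG P c r sr = 1)
    (sH : Finset (Fin N) → ℝ)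
    (hsH : ∀ H : Finset (Fin N), QM.IsSCC P H → 0 < sH H ∧ QM.PsiH P c r (sH H) H = 1)
    :
    IsGreatest {x : ℝ | ∃ H : Finset (Fin N), QM.IsSCC P H ∧ x = sH H} sr := by

  classical
  haveI : Nonempty (Fin N) := ⟨⟨0, by omega⟩⟩
  set A : Matrix (Fin N) (Fin N) ℝ := QM.AGs P c r sr with hA
  -- an edge exists
  have hedge_ex : ∃ i j : Fin N, QM.Edge P i j := by
    obtain ⟨i⟩ := (inferInstance : Nonempty (Fin N))
    have h2 := hPcard i
    have hne : {j : Fin N | 0 < P i j}.Nonempty := by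
      rcases Set.eq_empty_or_nonempty {j : Fin N | 0 < P i j} with h | h
      · rw [h] at h2; simp at h2
      · exact h
    obtain ⟨j, hj⟩ := hne
    exact ⟨i, j, hj⟩
  obtain ⟨i₀, j₀, hedge₀⟩ := hedge_ex
  -- the maximal edge value m
  set f : Fin N × Fin N → ℝ :=
    fun p => if 0 < P p.1 p.2 then P p.1 p.2 * c p.1 p.2 ^ r else 0 with hf
  have hprodne : (Finset.univ ×ˢ Finset.univ : Finset (Fin N × Fin N)).Nonempty :=
    ⟨(i₀, j₀), by simp⟩
  set m : ℝ := Finset.sup' _ hprodne f with hm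
  have hm_ge : ∀ i j, 0 < P i j → P i j * c i j ^ r ≤ m := by
    intro i j hij
    have h := Finset.le_sup' f (Finset.mem_product.2 ⟨Finset.mem_univ i, Finset.mem_univ j⟩ :
      (i, j) ∈ Finset.univ ×ˢ Finset.univ)
    simpa only [hf, if_pos hij] using h
  have hm0 : 0 < m := lt_of_lt_of_le (val_pos hc1 hedge₀) (hm_ge i₀ j₀ hedge₀)
  have hm1 : m < 1 := by
    rw [hm, Finset.sup'_lt_iff]
    intro p _
    by_cases hp : 0 < P p.1 p.2
    · simpa only [hf, if_pos hp] using val_lt_one hr hP0 hProw hc1 hp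
    · simp only [hf, if_neg hp]; norm_num
  -- strict decrease
  have hdec : ∀ (H : Finset (Fin N)), Nonempty {i // i ∈ H} → ∀ s s' : ℝ, 0 < s → s < s' →
      QM.PsiH P c r s H = 1 → QM.PsiH P c r s' H < 1 := by
    intro H hne s s' hs hss' h1
    have hk := psiH_le_kappa hr hP0 hProw hc1 hne hs hss' hm0.le hm_ge
    rw [h1, mul_one] at hk
    exact lt_of_le_of_lt hk
      (Real.rpow_lt_one hm0.le hm1 (sub_pos.2 (theta_lt hr hs hss')))
  -- PsiH at sr is at most 1
  have hPsiH_le : ∀ H : Finset (Fin N), Nonempty {i // i ∈ H} → QM.PsiH P c r sr H ≤ 1 := by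
    intro H hne
    have hsub := specRad_submatrix_le (A := A) (AGs_nonneg hc1 sr)
      (Subtype.val : {i // i ∈ H} → Fin N) Subtype.val_injective
    have heq : QM.PsiH P c r sr H = QM.specRad (A.submatrix Subtype.val Subtype.val) := rfl
    rw [heq]
    calc QM.specRad (A.submatrix Subtype.val Subtype.val) ≤ QM.specRad A := hsub
      _ = 1 := hsreq
  -- upper bound
  have hub : ∀ H : Finset (Fin N), QM.IsSCC P H → sH H ≤ sr := by
    intro H hH
    obtain ⟨u, hu, w, hw, he⟩ := hH.2.2
    have hne : Nonempty {i // i ∈ H} := ⟨⟨u, hu⟩⟩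
    obtain ⟨hsH0, hsH1⟩ := hsH H hH
    by_contra hlt
    push_neg at hlt
    have h2 : QM.PsiH P c r sr H ≤ 1 := hPsiH_le H hne
    rcases lt_or_eq_of_le h2 with h2' | h2'
    · -- PsiH sr < 1 ; then PsiH (sH H) should be < 1? no: we need other direction
      -- use hdec from sr to sH H requires PsiH sr = 1; instead use kappa directly
      have hk := psiH_le_kappa hr hP0 hProw hc1 hne hsr hlt hm0.le hm_ge
      rw [hsH1] at hk
      have hκ1 : m ^ (sH H/(sH H+r) - sr/(sr+r)) < 1 :=
        Real.rpow_lt_one hm0.le hm1 (sub_pos.2 (theta_lt hr hsr hlt))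
      have hκ0 : 0 ≤ m ^ (sH H/(sH H+r) - sr/(sr+r)) := Real.rpow_nonneg hm0.le _
      nlinarith
    · have := hdec H hne sr (sH H) hsr hlt h2'
      rw [hsH1] at this
      exact lt_irrefl _ this
  -- membership
  obtain ⟨z, hz, habs⟩ := exists_abs_eq_specRad A
  have habs1 : ‖z‖ = 1 := by rw [habs]; exact hsreq
  have hbt : (cmap A).BlockTriangular (bF P) := by
    intro i j hlt
    have h0 : A i j = 0 := by
      by_contra h0
      exact absurd (bF_le_of_rch (Relation.ReflTransGen.single (edge_of_AGs_ne_zero h0)))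
        (not_le.2 hlt)
    show ((A i j : ℝ) : ℂ) = 0
    rw [h0]; norm_num
  obtain ⟨k, hk, hzk⟩ := spectrum_block_of_blockTriangular (cmap A) (bF P) hbt hz
  obtain ⟨i₁, -, hbi₁⟩ := Finset.mem_image.1 hk
  set C : Finset (Fin N) := classF P i₁ with hC
  have hCne : Nonempty {x // x ∈ C} := ⟨⟨i₁, self_mem_classF i₁⟩⟩
  have hiff : ∀ x : Fin N, bF P x = k ↔ x ∈ C := by
    intro x
    constructor
    · intro hx
      have hmut := mut_of_bF_eq (P := P) (show bF P x = bF P i₁ by rw [hx, hbi₁])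
      exact mem_classF.2 ⟨hmut.2, hmut.1⟩
    · intro hx
      have h' := mem_classF.1 hx
      rw [← hbi₁]
      exact bF_eq_of_mut h'.2 h'.1
  haveI : Nonempty {x // bF P x = k} := ⟨⟨i₁, hbi₁⟩⟩
  have h1le : (1:ℝ) ≤ QM.specRad (A.toSquareBlock (bF P) k) := by
    have hblock : (cmap A).toSquareBlock (bF P) k
        = (A.toSquareBlock (bF P) k).map (fun t => (t : ℂ)) := rfl
    rw [hblock] at hzk
    calc (1:ℝ) = ‖z‖ := habs1.symm
      _ ≤ _ := abs_le_specRad _ hzk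
  let e : {x // x ∈ C} ≃ {x // bF P x = k} :=
    ⟨fun x => ⟨x.1, (hiff x.1).2 x.2⟩, fun x => ⟨x.1, (hiff x.1).1 x.2⟩,
      fun x => rfl, fun x => rfl⟩
  have hreix : QM.PsiH P c r sr C = QM.specRad (A.toSquareBlock (bF P) k) := by
    have h1 : (A.toSquareBlock (bF P) k).submatrix e e = QM.AHs P c r sr C := rfl
    have h2 := specRad_reindex (A.toSquareBlock (bF P) k) e
    rw [h1] at h2
    exact h2.symm ▸ rfl
  have hge : (1:ℝ) ≤ QM.PsiH P c r sr C := by rw [hreix]; exact h1le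
  have hCedge : ∃ u ∈ C, ∃ v ∈ C, QM.Edge P u v := by
    by_contra hno
    push_neg at hno
    have hzero : ∀ x y : {x // x ∈ C}, QM.AHs P c r sr C x y = 0 := by
      intro x y
      by_contra h0
      exact hno x.1 x.2 y.1 y.2 (edge_of_AGs_ne_zero h0)
    have h0 := specRad_zero_matrix (A := QM.AHs P c r sr C) hzero
    have : QM.PsiH P c r sr C = 0 := h0
    linarith [hge.trans_eq this]
  have hSCC : QM.IsSCC P C := isSCC_classF i₁ hCedge
  have hPsiC : QM.PsiH P c r sr C = 1 := le_antisymm (hPsiH_le C hCne) hge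
  obtain ⟨hs0C, hs1C⟩ := hsH C hSCC
  have heqC : sH C = sr := by
    by_contra hne'
    rcases lt_or_gt_of_ne hne' with hlt | hlt
    · have := hdec C hCne (sH C) sr hs0C hlt hs1C
      rw [hPsiC] at this; exact lt_irrefl _ this
    · have := hdec C hCne sr (sH C) hsr hlt hPsiC
      rw [hs1C] at this; exact lt_irrefl _ this
  constructor
  · exact ⟨C, hSCC, heqC.symm⟩
  · rintro x ⟨H, hH, rfl⟩
    exact hub H hH
end
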